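/- arXiv:1108.2817 — 4 statements merged into one kernel-verified Lean document; each statement's English description precedes it below -/
import Mathlib

section
/- Let b, g ∈ L²(𝕋) with b̂(n) = 0 and ĝ(n) = 0 for all n < 0. Write B = Pb, G = Pg, and let F(z) = (1/(2πi))∮_𝕋 b(ζ)·conj(g(ζ))/(ζ − z) dζ for z ∈ 𝔻. Then for every z ∈ 𝔻: F′(z) − conj(G(z))·B′(z) = (1/(2πi))∮_𝕋 (b(ζ) − B(z))·conj(g(ζ) − G(z))/(ζ − z)² dζ. -/
open MeasureTheory Real Complex Filter
open scoped Topology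

noncomputable section

/-- An arc of the unit circle `𝕋`, described by the angle of its midpoint
and its arclength (in `(0, 2π]`). -/
structure Arc where
  center : ℝ
  len : ℝ
  len_pos : 0 < len
  len_le : len ≤ 2 * Real.pi

/-- The mean `f_I` of a boundary function over an arc `I` (angle parametrization). -/
noncomputable def Arc.avg (I : Arc) (u : ℝ → ℂ) : ℂ :=
  (I.len)⁻¹ • ∫ t in (I.center - I.len / 2)..(I.center + I.len / 2), u t

/-- The mean oscillation `(1/|I|) ∫_I |u - u_I| |dζ|` of a boundary function over an arc. -/
noncomputable def Arc.mo (I : Arc) (u : ℝ → ℂ) : ℝ :=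
  (I.len)⁻¹ * ∫ t in (I.center - I.len / 2)..(I.center + I.len / 2), ‖u t - I.avg u‖

/-- The BMO seminorm `‖u‖_*`. -/
noncomputable def bmoSeminorm (u : ℝ → ℂ) : ℝ := ⨆ I : Arc, I.mo u

/-- The logarithmic BMO seminorm `‖u‖_**`. -/
noncomputable def logBmoSeminorm (u : ℝ → ℂ) : ℝ :=
  ⨆ I : Arc, Real.log (4 * Real.pi / I.len) * I.mo u

/-- `‖u‖_* < ∞`. -/
def BmoFinite (u : ℝ → ℂ) : Prop := BddAbove (Set.range fun I : Arc => I.mo u)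

/-- `‖u‖_** < ∞`. -/
def LogBmoFinite (u : ℝ → ℂ) : Prop :=
  BddAbove (Set.range fun I : Arc => Real.log (4 * Real.pi / I.len) * I.mo u)

/-- `u ∈ L²(𝕋)`, where `u` is the boundary function in the angle variable. -/
def MemL2T (u : ℝ → ℂ) : Prop :=
  Function.Periodic u (2 * Real.pi) ∧
    MemLp u 2 (volume.restrict (Set.Ioc (0:ℝ) (2 * Real.pi)))

/-- The `n`-th Fourier coefficient of a boundary function. -/
noncomputable def fc (u : ℝ → ℂ) (n : ℤ) : ℂ :=
  (2 * Real.pi)⁻¹ • ∫ t in (0:ℝ)..(2 * Real.pi),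
    u t * Complex.exp (-(n : ℂ) * t * Complex.I)

/-- The Carleson square `S(I)`. -/
def Arc.box (I : Arc) : Set ℂ :=
  {z | ∃ r t : ℝ, 1 - I.len / (2 * Real.pi) < r ∧ r < 1 ∧
        |t - I.center| < I.len / 2 ∧ z = (r : ℂ) * Complex.exp (t * Complex.I)}

/-- `z_I`, the midpoint of the inner side of `S(I)`. -/
noncomputable def Arc.innerPoint (I : Arc) : ℂ :=
  ((1 - I.len / (2 * Real.pi) : ℝ) : ℂ) * Complex.exp (I.center * Complex.I)

/-- The Cauchy (Szegő) transform `Pu(z) = (1/2πi) ∮_𝕋 u(ζ)/(ζ - z) dζ`. -/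
noncomputable def cauchyT (u : ℝ → ℂ) (z : ℂ) : ℂ :=
  (2 * Real.pi)⁻¹ • ∫ t in (0:ℝ)..(2 * Real.pi),
    u t * Complex.exp (t * Complex.I) / (Complex.exp (t * Complex.I) - z)

/-- `∬_{S(I)} ‖F'(z)‖² (1 - |z|²) dm(z)`. -/
noncomputable def carlesonInt (I : Arc) (F : ℂ → ℂ) : ℝ :=
  ∫ z in I.box, ‖deriv F z‖ ^ 2 * (1 - ‖z‖ ^ 2)

section AuxStmt4
open intervalIntegral Metric

lemma normE (t : ℝ) : ‖Complex.exp (t * Complex.I)‖ = 1 := by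
  simp [Complex.norm_exp_ofReal_mul_I]

lemma sub_norm_ge {z : ℂ} (hz : ‖z‖ < 1) (t : ℝ) :
    1 - ‖z‖ ≤ ‖Complex.exp (t * Complex.I) - z‖ := by
  have := norm_sub_norm_le (Complex.exp (t * Complex.I)) z
  rw [normE] at this; linarith

lemma sub_ne {z : ℂ} (hz : ‖z‖ < 1) (t : ℝ) :
    Complex.exp (t * Complex.I) - z ≠ 0 := by
  intro h
  have := sub_norm_ge hz t
  rw [h, norm_zero] at this; linarith

lemma memL2_intervalIntegrable {u : ℝ → ℂ} (hu : MemLp u 2 (volume.restrict (Set.Ioc (0:ℝ) (2 * Real.pi)))) :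
    IntervalIntegrable u volume 0 (2 * Real.pi) := by
  have hfin : IsFiniteMeasure (volume.restrict (Set.Ioc (0:ℝ) (2 * Real.pi))) := by
    constructor
    rw [Measure.restrict_apply_univ]
    exact measure_Ioc_lt_top
  have : Integrable u (volume.restrict (Set.Ioc (0:ℝ) (2 * Real.pi))) :=
    hu.integrable one_le_two
  rw [intervalIntegrable_iff_integrableOn_Ioc_of_le (by positivity)]
  exact this

lemma contP {z : ℂ} (hz : ‖z‖ < 1) :
    Continuous fun t : ℝ => Complex.exp (t * Complex.I) / (Complex.exp (t * Complex.I) - z) ^ 2 := by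
  apply Continuous.div
  · exact Complex.continuous_exp.comp (by continuity)
  · exact ((Complex.continuous_exp.comp (by continuity)).sub continuous_const).pow 2
  · exact fun t => pow_ne_zero _ (sub_ne hz t)

lemma contP1 {z : ℂ} (hz : ‖z‖ < 1) :
    Continuous fun t : ℝ => Complex.exp (t * Complex.I) / (Complex.exp (t * Complex.I) - z) := by
  apply Continuous.div
  · exact Complex.continuous_exp.comp (by continuity)
  · exact (Complex.continuous_exp.comp (by continuity)).sub continuous_const
  · exact fun t => sub_ne hz t

lemma iiP {h : ℝ → ℂ} (hh : IntervalIntegrable h volume 0 (2 * Real.pi)) {z : ℂ} (hz : ‖z‖ < 1) :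
    IntervalIntegrable (fun t => h t * Complex.exp (t * Complex.I) / (Complex.exp (t * Complex.I) - z) ^ 2)
      volume 0 (2 * Real.pi) := by
  have := hh.mul_continuousOn (contP hz).continuousOn
  simpa [mul_div_assoc] using this

lemma iiP1 {h : ℝ → ℂ} (hh : IntervalIntegrable h volume 0 (2 * Real.pi)) {z : ℂ} (hz : ‖z‖ < 1) :
    IntervalIntegrable (fun t => h t * Complex.exp (t * Complex.I) / (Complex.exp (t * Complex.I) - z))
      volume 0 (2 * Real.pi) := by
  have := hh.mul_continuousOn (contP1 hz).continuousOn
  simpa [mul_div_assoc] using this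

lemma hasDerivAt_key {h : ℝ → ℂ} (hh : IntervalIntegrable h volume 0 (2 * Real.pi))
    {z : ℂ} (hz : ‖z‖ < 1) :

    HasDerivAt (fun w => ∫ t in (0:ℝ)..(2 * Real.pi),
        h t * Complex.exp (t * Complex.I) / (Complex.exp (t * Complex.I) - w))
      (∫ t in (0:ℝ)..(2 * Real.pi),
        h t * Complex.exp (t * Complex.I) / (Complex.exp (t * Complex.I) - z) ^ 2) z := by
  set ε := (1 - ‖z‖) / 2 with hε
  have hε_pos : 0 < ε := by simp only [hε]; linarith
  have hball : ∀ x ∈ ball z ε, ‖x‖ < 1 ∧ ε ≤ 1 - ‖x‖ := by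
    intro x hx
    rw [mem_ball, dist_eq_norm] at hx
    have : ‖x‖ ≤ ‖z‖ + ε := by
      have := norm_sub_norm_le x z
      linarith
    constructor <;> [skip; skip] <;> simp only [hε] at * <;> linarith
  have hmeas : AEStronglyMeasurable h (volume.restrict (Set.uIoc (0:ℝ) (2 * Real.pi))) := by
    rw [Set.uIoc_of_le (by positivity)]
    exact hh.1.aestronglyMeasurable
  have hme : Measurable fun t : ℝ => Complex.exp (t * Complex.I) :=
    Complex.measurable_exp.comp (Complex.measurable_ofReal.mul measurable_const)
  have hmeas1 : ∀ x : ℂ, AEStronglyMeasurable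
      (fun t : ℝ => h t * Complex.exp (t * Complex.I) / (Complex.exp (t * Complex.I) - x))
      (volume.restrict (Set.uIoc (0:ℝ) (2 * Real.pi))) := by
    intro x
    have M : Measurable (fun t : ℝ => Complex.exp (t * Complex.I) / (Complex.exp (t * Complex.I) - x)) :=
      hme.div (hme.sub measurable_const)
    have := hmeas.mul M.aestronglyMeasurable
    refine this.congr (Filter.Eventually.of_forall fun t => ?_)
    exact (mul_div_assoc _ _ _).symm
  have hmeas2 : AEStronglyMeasurable
      (fun t : ℝ => h t * Complex.exp (t * Complex.I) / (Complex.exp (t * Complex.I) - z) ^ 2)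
      (volume.restrict (Set.uIoc (0:ℝ) (2 * Real.pi))) := by
    have M : Measurable (fun t : ℝ => Complex.exp (t * Complex.I) / (Complex.exp (t * Complex.I) - z) ^ 2) :=
      hme.div ((hme.sub measurable_const).pow_const 2)
    have := hmeas.mul M.aestronglyMeasurable
    refine this.congr (Filter.Eventually.of_forall fun t => ?_)
    exact (mul_div_assoc _ _ _).symm
  have key := intervalIntegral.hasDerivAt_integral_of_dominated_loc_of_deriv_le
    (F := fun w t => h t * Complex.exp (t * Complex.I) / (Complex.exp (t * Complex.I) - w))
    (F' := fun w t => h t * Complex.exp (t * Complex.I) / (Complex.exp (t * Complex.I) - w) ^ 2)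
    (bound := fun t => ‖h t‖ * (ε ^ 2)⁻¹)
    (ball_mem_nhds z hε_pos)
    (Filter.Eventually.of_forall fun x => hmeas1 x)
    (iiP1 hh hz)
    hmeas2
    (Filter.Eventually.of_forall fun t _ x hx => by
      obtain ⟨hx1, hx2⟩ := hball x hx
      have hne := sub_ne hx1 t
      have hge : ε ≤ ‖Complex.exp (t * Complex.I) - x‖ := le_trans hx2 (sub_norm_ge hx1 t)
      rw [norm_div, norm_mul, normE, mul_one, norm_pow]
      rw [div_eq_mul_inv]
      refine mul_le_mul_of_nonneg_left ?_ (norm_nonneg _)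
      have h1 : (0:ℝ) < ε ^ 2 := pow_pos hε_pos 2
      have h2 : ε ^ 2 ≤ ‖Complex.exp (t * Complex.I) - x‖ ^ 2 :=
        pow_le_pow_left₀ hε_pos.le hge 2
      exact inv_anti₀ h1 h2)
    (hh.norm.mul_const _)
    (Filter.Eventually.of_forall fun t _ x hx => by
      obtain ⟨hx1, _⟩ := hball x hx
      have hne := sub_ne hx1 t
      have h1 : HasDerivAt (fun w : ℂ => (Complex.exp (t * Complex.I) - w)⁻¹)
          (((Complex.exp (t * Complex.I) - x) ^ 2)⁻¹) x := by
        have h0 : HasDerivAt (fun w : ℂ => Complex.exp (t * Complex.I) - w) (-1) x :=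
          (hasDerivAt_id x).const_sub _
        have := h0.inv hne
        exact this.congr_deriv (by rw [neg_neg, one_div])
      have := h1.const_mul (h t * Complex.exp (t * Complex.I))
      simpa only [div_eq_mul_inv] using this)
  exact key.2

lemma hasSum_P {z : ℂ} (hz : ‖z‖ < 1)
    (sub_ne : ∀ {w : ℂ}, ‖w‖ < 1 → ∀ t : ℝ, Complex.exp (t * Complex.I) - w ≠ 0)
    (t : ℝ) :
    HasSum (fun n : ℕ => ((n : ℂ) + 1) * z ^ n * Complex.exp (-((n : ℂ) + 1) * t * Complex.I))
      (Complex.exp (t * Complex.I) / (Complex.exp (t * Complex.I) - z) ^ 2) := by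
  set e := Complex.exp (t * Complex.I) with he
  have hene : e ≠ 0 := Complex.exp_ne_zero _
  have hez : e - z ≠ 0 := sub_ne hz t
  set w := z * e⁻¹ with hw
  have hwn : ‖w‖ < 1 := by
    rw [hw, norm_mul, norm_inv]
    have : ‖e‖ = 1 := by
      rw [he]; simpa using Complex.norm_exp_ofReal_mul_I t
    rw [this]; simpa using hz
  have h1w : 1 - w = (e - z) * e⁻¹ := by
    rw [hw, sub_mul, mul_comm e e⁻¹, inv_mul_cancel₀ hene]
  have h1wne : 1 - w ≠ 0 := by
    rw [h1w]
    exact mul_ne_zero hez (inv_ne_zero hene)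
  have H1 : HasSum (fun n : ℕ => (n : ℂ) * w ^ n) (w / (1 - w) ^ 2) :=
    hasSum_coe_mul_geometric_of_norm_lt_one hwn
  have H2 : HasSum (fun n : ℕ => w ^ n) ((1 - w)⁻¹) :=
    hasSum_geometric_of_norm_lt_one hwn
  have H := (H1.add H2).mul_left e⁻¹
  have hterm : ∀ n : ℕ,
      ((n : ℂ) + 1) * z ^ n * Complex.exp (-((n : ℂ) + 1) * t * Complex.I) =
        e⁻¹ * ((n : ℂ) * w ^ n + w ^ n) := by
    intro n
    have hexp : Complex.exp (-((n : ℂ) + 1) * t * Complex.I) = (e⁻¹) ^ (n + 1) := by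
      rw [← Complex.exp_neg, ← Complex.exp_nat_mul]
      congr 1
      push_cast
      ring
    rw [hexp, hw]
    rw [mul_pow, pow_succ]
    ring
  have hA : w / (1 - w) ^ 2 + (1 - w)⁻¹ = e ^ 2 / (e - z) ^ 2 := by
    rw [h1w, hw, mul_pow, mul_inv]
    field_simp
    ring
  have hsum : e⁻¹ * (w / (1 - w) ^ 2 + (1 - w)⁻¹) = e / (e - z) ^ 2 := by
    rw [hA, ← mul_div_assoc, pow_two, ← mul_assoc, inv_mul_cancel₀ hene, one_mul]
  rw [← hsum]
  exact H.congr_fun hterm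

lemma term_int_zero {u : ℝ → ℂ} (h0 : ∀ n : ℤ, n < 0 → fc u n = 0) (n : ℕ) :
    ∫ t in (0:ℝ)..(2 * Real.pi),
      (starRingEnd ℂ) (u t) * Complex.exp (-((n : ℂ) + 1) * t * Complex.I) = 0 := by
  have key : (∫ t in (0:ℝ)..(2 * Real.pi),
      u t * Complex.exp (((n : ℂ) + 1) * t * Complex.I)) = 0 := by
    have h := h0 (-(n + 1)) (by omega)
    rw [fc] at h
    have h2 : (∫ t in (0:ℝ)..(2 * Real.pi),
        u t * Complex.exp (-((-(n+1) : ℤ) : ℂ) * t * Complex.I)) = 0 := by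
      rcases smul_eq_zero.mp h with h' | h'
      · exact absurd h' (by positivity)
      · exact h'
    rw [← h2]
    congr 1
    ext t
    congr 2
    push_cast
    ring
  have e1 : ∀ t : ℝ, (starRingEnd ℂ) (u t) * Complex.exp (-((n : ℂ) + 1) * t * Complex.I) =
      (starRingEnd ℂ) (u t * Complex.exp (((n : ℂ) + 1) * t * Complex.I)) := by
    intro t
    rw [map_mul, ← Complex.exp_conj]
    congr 2
    simp only [map_mul, map_add, map_one, map_natCast, Complex.conj_I, Complex.conj_ofReal]
    ring
  have conj_int : (∫ t in (0:ℝ)..(2 * Real.pi),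
      (starRingEnd ℂ) (u t * Complex.exp (((n : ℂ) + 1) * t * Complex.I))) =
      (starRingEnd ℂ) (∫ t in (0:ℝ)..(2 * Real.pi),
        u t * Complex.exp (((n : ℂ) + 1) * t * Complex.I)) := by
    rw [intervalIntegral, intervalIntegral, integral_conj, integral_conj, ← map_sub]
  simp only [e1]
  rw [conj_int, key, map_zero]

lemma vanish {u : ℝ → ℂ} (hu : IntervalIntegrable u volume 0 (2 * Real.pi))
    (h0 : ∀ n : ℤ, n < 0 → fc u n = 0) {z : ℂ} (hz : ‖z‖ < 1)
    (sub_ne : ∀ {w : ℂ}, ‖w‖ < 1 → ∀ t : ℝ, Complex.exp (t * Complex.I) - w ≠ 0) :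
    ∫ t in (0:ℝ)..(2 * Real.pi),
      (starRingEnd ℂ) (u t) * Complex.exp (t * Complex.I) /
        (Complex.exp (t * Complex.I) - z) ^ 2 = 0 := by
  have h2pi : (0:ℝ) ≤ 2 * Real.pi := by positivity
  set μ := volume.restrict (Set.Ioc (0:ℝ) (2 * Real.pi)) with hμ
  set F : ℕ → ℝ → ℂ := fun n t =>
    (starRingEnd ℂ) (u t) * (((n : ℂ) + 1) * z ^ n * Complex.exp (-((n : ℂ) + 1) * t * Complex.I))
    with hF
  have huμ : Integrable u μ := (intervalIntegrable_iff_integrableOn_Ioc_of_le h2pi).mp hu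
  have hconj : Integrable (fun t => (starRingEnd ℂ) (u t)) μ := by
    refine huμ.mono ?_ (Filter.Eventually.of_forall fun t => ?_)
    · exact (continuous_star.comp_aestronglyMeasurable huμ.1).congr
        (Filter.Eventually.of_forall fun t => rfl)
    · simp
  have hexp_norm : ∀ n : ℕ, ∀ t : ℝ,
      ‖Complex.exp (-((n : ℂ) + 1) * t * Complex.I)‖ = 1 := by
    intro n t
    have harg : -((n : ℂ) + 1) * t * Complex.I = ((-((n:ℝ)+1)*t : ℝ) : ℂ) * Complex.I := by
      push_cast; ring
    rw [harg]
    simpa using Complex.norm_exp_ofReal_mul_I (-((n:ℝ)+1)*t)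
  have hFint : ∀ n : ℕ, Integrable (F n) μ := by
    intro n
    have hb : Integrable (fun t : ℝ =>
        (((n : ℂ) + 1) * z ^ n * Complex.exp (-((n : ℂ) + 1) * t * Complex.I)) *
          (starRingEnd ℂ) (u t)) μ := by
      refine hconj.bdd_mul (c := ‖((n : ℂ) + 1) * z ^ n‖) ?_ (Filter.Eventually.of_forall fun t => ?_)
      · exact (continuous_const.mul (Complex.continuous_exp.comp
          ((continuous_const.mul Complex.continuous_ofReal).mul continuous_const))).aestronglyMeasurable
      · rw [norm_mul, hexp_norm n t, mul_one]
    exact hb.congr (Filter.Eventually.of_forall fun t => mul_comm _ _)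
  have hnormF : ∀ n : ℕ, ∀ t : ℝ, ‖F n t‖ = ‖u t‖ * ‖((n : ℂ) + 1) * z ^ n‖ := by
    intro n t
    rw [hF]
    simp only [norm_mul, RCLike.norm_conj, hexp_norm n t, mul_one]
  have hFsum : Summable fun n : ℕ => ∫ t, ‖F n t‖ ∂μ := by
    have heq : ∀ n : ℕ, (∫ t, ‖F n t‖ ∂μ) = (∫ t, ‖u t‖ ∂μ) * ‖((n : ℂ) + 1) * z ^ n‖ := by
      intro n
      simp_rw [hnormF n]
      exact integral_mul_const _ _
    refine Summable.congr ?_ (fun n => (heq n).symm)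
    apply Summable.mul_left
    have hr : ‖(‖z‖ : ℝ)‖ < 1 := by rwa [Real.norm_eq_abs, _root_.abs_of_nonneg (norm_nonneg z)]
    have s1 : Summable (fun n : ℕ => (n : ℝ) * ‖z‖ ^ n) := by
      simpa using summable_pow_mul_geometric_of_norm_lt_one 1 hr
    have s2 : Summable (fun n : ℕ => ‖z‖ ^ n) := summable_geometric_of_lt_one (norm_nonneg z) hz
    refine Summable.congr (s1.add s2) fun n => ?_
    have hn1 : ‖((n : ℂ) + 1)‖ = (n : ℝ) + 1 := by
      have h' : ((n : ℂ) + 1) = ((n + 1 : ℕ) : ℂ) := by push_cast; ring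
      rw [h', Complex.norm_natCast]; push_cast; ring
    rw [norm_mul, norm_pow, hn1]
    ring
  have hzero : ∀ n : ℕ, (∫ t, F n t ∂μ) = 0 := by
    intro n
    have : (∫ t, F n t ∂μ) = ∫ t in (0:ℝ)..(2 * Real.pi), F n t := by
      rw [intervalIntegral.integral_of_le h2pi]
    rw [this]
    have : ∀ t : ℝ, F n t = (((n : ℂ) + 1) * z ^ n) *
        ((starRingEnd ℂ) (u t) * Complex.exp (-((n : ℂ) + 1) * t * Complex.I)) := by
      intro t; rw [hF]; ring
    simp_rw [this]
    rw [intervalIntegral.integral_const_mul, term_int_zero h0 n, mul_zero]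
  have HS := hasSum_integral_of_summable_integral_norm (μ := μ) hFint hFsum
  have htsum0 : (∫ t, (∑' n, F n t) ∂μ) = 0 := by
    have : (fun n => ∫ t, F n t ∂μ) = fun _ => (0 : ℂ) := funext hzero
    rw [this] at HS
    exact (hasSum_zero.unique HS).symm
  have hts : ∀ t : ℝ, (∑' n, F n t) =
      (starRingEnd ℂ) (u t) * Complex.exp (t * Complex.I) /
        (Complex.exp (t * Complex.I) - z) ^ 2 := by
    intro t
    rw [mul_div_assoc]
    exact ((hasSum_P hz sub_ne t).mul_left _).tsum_eq
  rw [intervalIntegral.integral_of_le h2pi]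
  rw [← htsum0]
  exact setIntegral_congr_fun measurableSet_Ioc (fun t _ => (hts t).symm) |>.symm ▸ rfl

lemma integrable_conj' {μ : Measure ℝ} {u : ℝ → ℂ} (h : Integrable u μ) :
    Integrable (fun t => (starRingEnd ℂ) (u t)) μ := by
  refine Integrable.mono h ?_ (Filter.Eventually.of_forall fun t => by simp)
  exact (continuous_star.comp_aestronglyMeasurable h.1).congr
    (Filter.Eventually.of_forall fun t => rfl)

lemma intervalIntegrable_conj {u : ℝ → ℂ} {a b : ℝ}
    (hu : IntervalIntegrable u volume a b) :
    IntervalIntegrable (fun t => (starRingEnd ℂ) (u t)) volume a b :=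
  ⟨integrable_conj' hu.1, integrable_conj' hu.2⟩

lemma fc_one : ∀ n : ℤ, n < 0 → fc (fun _ : ℝ => (1:ℂ)) n = 0 := by
  intro n hn
  rw [fc]
  have hpt : ∀ t : ℝ, (1:ℂ) * Complex.exp (-(n : ℂ) * t * Complex.I) =
      Complex.exp ((-(n : ℂ) * Complex.I) * t) := by
    intro t; rw [one_mul]; congr 1; ring
  simp_rw [hpt]
  have hc : (-(n : ℂ) * Complex.I) ≠ 0 := by
    refine mul_ne_zero (neg_ne_zero.mpr ?_) Complex.I_ne_zero
    exact_mod_cast (by omega : n ≠ 0)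
  rw [integral_exp_mul_complex hc]
  have h1 : Complex.exp (-(n : ℂ) * Complex.I * ((2 * Real.pi : ℝ) : ℂ)) = 1 := by
    have := Complex.exp_int_mul_two_pi_mul_I (-n)
    rw [← this]
    congr 1
    push_cast
    ring
  rw [h1]
  norm_num

lemma memL2_mul_conj {b g : ℝ → ℂ} (hb : MemL2T b) (hg : MemL2T g) :
    IntervalIntegrable (fun t => b t * (starRingEnd ℂ) (g t)) volume 0 (2 * Real.pi) := by
  set μ := volume.restrict (Set.Ioc (0:ℝ) (2 * Real.pi)) with hμ
  have hgc : MemLp (fun t => (starRingEnd ℂ) (g t)) 2 μ := by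
    refine ⟨(continuous_star.comp_aestronglyMeasurable hg.2.1).congr
      (Filter.Eventually.of_forall fun t => rfl), ?_⟩
    have heq : eLpNorm (fun t => (starRingEnd ℂ) (g t)) 2 μ = eLpNorm g 2 μ := by
      apply eLpNorm_congr_norm_ae
      exact Filter.Eventually.of_forall fun t => by simp
    rw [heq]
    exact hg.2.2
  have hmul : MemLp (b • fun t => (starRingEnd ℂ) (g t)) 1 μ :=
    MemLp.smul (p := 2) (q := 2) (r := 1) hgc hb.2
  have hint : Integrable (fun t => b t * (starRingEnd ℂ) (g t)) μ := by
    refine (memLp_one_iff_integrable.mp hmul).congr (Filter.Eventually.of_forall fun t => ?_)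
    simp [smul_eq_mul]
  rw [intervalIntegrable_iff_integrableOn_Ioc_of_le (by positivity)]
  exact hint

end AuxStmt4

/-- The identity `F'(z) - conj(G(z)) B'(z)
= (1/2πi) ∮_𝕋 (b(ζ) - B(z)) conj(g(ζ) - G(z)) / (ζ - z)² dζ` for `z ∈ 𝔻`,
where `B = Pb`, `G = Pg`, `F = P(b · conj g)`. -/
theorem stmt_4 (b g : ℝ → ℂ) (hb : MemL2T b) (hg : MemL2T g)
    (hb0 : ∀ n : ℤ, n < 0 → fc b n = 0) (hg0 : ∀ n : ℤ, n < 0 → fc g n = 0) :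
    ∀ z : ℂ, ‖z‖ < 1 →
      deriv (cauchyT fun t => b t * (starRingEnd ℂ) (g t)) z -
          (starRingEnd ℂ) (cauchyT g z) * deriv (cauchyT b) z =
        (2 * Real.pi)⁻¹ • ∫ t in (0:ℝ)..(2 * Real.pi),
          (b t - cauchyT b z) * (starRingEnd ℂ) (g t - cauchyT g z) *
            Complex.exp (t * Complex.I) / (Complex.exp (t * Complex.I) - z) ^ 2 := by
  intro z hz
  have h2pi : (0:ℝ) ≤ 2 * Real.pi := by positivity
  have hbI := memL2_intervalIntegrable hb.2
  have hgI := memL2_intervalIntegrable hg.2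
  have hgcI := intervalIntegrable_conj hgI
  have hbgI := memL2_mul_conj hb hg
  -- derivative formulas
  have hDF : deriv (cauchyT fun t => b t * (starRingEnd ℂ) (g t)) z =
      (2 * Real.pi)⁻¹ • ∫ t in (0:ℝ)..(2 * Real.pi),
        b t * (starRingEnd ℂ) (g t) * Complex.exp (t * Complex.I) /
          (Complex.exp (t * Complex.I) - z) ^ 2 := by
    have h := (hasDerivAt_key hbgI hz).const_smul ((2 * Real.pi)⁻¹ : ℝ)
    exact h.deriv
  have hDB : deriv (cauchyT b) z =
      (2 * Real.pi)⁻¹ • ∫ t in (0:ℝ)..(2 * Real.pi),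
        b t * Complex.exp (t * Complex.I) / (Complex.exp (t * Complex.I) - z) ^ 2 := by
    have h := (hasDerivAt_key hbI hz).const_smul ((2 * Real.pi)⁻¹ : ℝ)
    exact h.deriv
  -- vanishing integrals
  have vg : (∫ t in (0:ℝ)..(2 * Real.pi),
      (starRingEnd ℂ) (g t) * Complex.exp (t * Complex.I) /
        (Complex.exp (t * Complex.I) - z) ^ 2) = 0 :=
    vanish hgI hg0 hz (fun {w} hw t => sub_ne hw t)
  have v1 : (∫ t in (0:ℝ)..(2 * Real.pi),
      Complex.exp (t * Complex.I) / (Complex.exp (t * Complex.I) - z) ^ 2) = 0 := by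
    have h := vanish (u := fun _ => (1:ℂ)) (intervalIntegrable_const) fc_one hz
      (fun {w} hw t => sub_ne hw t)
    simpa using h
  set B := cauchyT b z with hB
  set G := cauchyT g z with hG
  have hpt : ∀ t : ℝ,
      (b t - B) * (starRingEnd ℂ) (g t - G) * Complex.exp (t * Complex.I) /
          (Complex.exp (t * Complex.I) - z) ^ 2 =
        b t * (starRingEnd ℂ) (g t) * Complex.exp (t * Complex.I) /
            (Complex.exp (t * Complex.I) - z) ^ 2
          - (starRingEnd ℂ) G * (b t * Complex.exp (t * Complex.I) /
            (Complex.exp (t * Complex.I) - z) ^ 2)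
          - B * ((starRingEnd ℂ) (g t) * Complex.exp (t * Complex.I) /
            (Complex.exp (t * Complex.I) - z) ^ 2)
          + (B * (starRingEnd ℂ) G) * (Complex.exp (t * Complex.I) /
            (Complex.exp (t * Complex.I) - z) ^ 2) := by
    intro t
    rw [map_sub]
    ring
  have ii1 := iiP hbgI hz
  have ii2 := (iiP hbI hz).const_mul ((starRingEnd ℂ) G)
  have ii3 := (iiP hgcI hz).const_mul B
  have ii4 : IntervalIntegrable (fun t : ℝ => (B * (starRingEnd ℂ) G) *
      (Complex.exp (t * Complex.I) / (Complex.exp (t * Complex.I) - z) ^ 2))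
      volume 0 (2 * Real.pi) :=
    (continuous_const.mul (contP hz)).intervalIntegrable _ _
  have hsplit : (∫ t in (0:ℝ)..(2 * Real.pi),
      (b t - B) * (starRingEnd ℂ) (g t - G) * Complex.exp (t * Complex.I) /
        (Complex.exp (t * Complex.I) - z) ^ 2) =
      (∫ t in (0:ℝ)..(2 * Real.pi), b t * (starRingEnd ℂ) (g t) * Complex.exp (t * Complex.I) /
          (Complex.exp (t * Complex.I) - z) ^ 2)
        - (starRingEnd ℂ) G * (∫ t in (0:ℝ)..(2 * Real.pi), b t * Complex.exp (t * Complex.I) /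
          (Complex.exp (t * Complex.I) - z) ^ 2)
        - B * (∫ t in (0:ℝ)..(2 * Real.pi), (starRingEnd ℂ) (g t) * Complex.exp (t * Complex.I) /
          (Complex.exp (t * Complex.I) - z) ^ 2)
        + (B * (starRingEnd ℂ) G) * (∫ t in (0:ℝ)..(2 * Real.pi),
          Complex.exp (t * Complex.I) / (Complex.exp (t * Complex.I) - z) ^ 2) := by
    rw [intervalIntegral.integral_congr (fun t _ => hpt t)]
    rw [intervalIntegral.integral_add ((ii1.sub ii2).sub ii3) ii4,
        intervalIntegral.integral_sub (ii1.sub ii2) ii3,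
        intervalIntegral.integral_sub ii1 ii2,
        intervalIntegral.integral_const_mul, intervalIntegral.integral_const_mul,
        intervalIntegral.integral_const_mul]
  rw [hDF, hDB, hsplit, vg, v1]
  simp only [Complex.real_smul, mul_zero, sub_zero, add_zero]
  ring
end
end

section
/- There is an absolute constant c > 0 such that for every arc I of 𝕋 with arclength |I| ∈ (0, 2π]: (1/|I|)∬_{S(I)} 1/((1 − |z|²)·log²(2/(1 − |z|²))) dm(z) ≤ c / log(4π/|I|). -/
open MeasureTheory Real Complex Filter
open scoped Topology

noncomputable section

private lemma log_two_div_pos {v : ℝ} (h0 : 0 < v) (h1 : v ≤ 1) : 0 < Real.log (2 / v) := by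
  apply Real.log_pos
  rw [lt_div_iff₀ h0]; linarith

private lemma key_hasDeriv {x : ℝ} (hx0 : 0 ≤ x) (hx1 : x < 1) :
    HasDerivAt (fun y : ℝ => -(2⁻¹ * (Real.log (2 / (1 - y ^ 2)))⁻¹))
      (x * (1 / ((1 - x ^ 2) * (Real.log (2 / (1 - x ^ 2))) ^ 2))) x := by
  have hv : 0 < 1 - x ^ 2 := by nlinarith
  have hlog : 0 < Real.log (2 / (1 - x ^ 2)) := log_two_div_pos hv (by nlinarith)
  have h1 : HasDerivAt (fun y : ℝ => 1 - y ^ 2) (-(2 * x)) x := by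
    simpa using ((hasDerivAt_pow 2 x).const_sub 1)
  have h2 := (h1.inv hv.ne').const_mul (2:ℝ)
  have h2' : ∀ y : ℝ, 2 * (1 - y ^ 2)⁻¹ = 2 / (1 - y ^ 2) := fun y => by rw [div_eq_mul_inv]
  have hq : (0:ℝ) < 2 / (1 - x ^ 2) := by positivity
  have h3 := h2.log (by show 2 * (1 - x ^ 2)⁻¹ ≠ 0; rw [h2' x]; exact hq.ne')
  simp only [Pi.inv_apply, h2'] at h3
  have h4 := ((h3.inv hlog.ne').const_mul (2⁻¹ : ℝ)).neg
  simp only [Pi.inv_apply, Pi.neg_def] at h4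
  refine h4.congr_deriv ?_
  field_simp

private lemma key_cont {a : ℝ} (ha : 0 ≤ a) :
    ContinuousOn (fun y : ℝ => -(2⁻¹ * (Real.log (2 / (1 - y ^ 2)))⁻¹)) (Set.Icc a 1) := by
  intro x hx
  rcases lt_or_eq_of_le hx.2 with hx1 | hx1
  · have hx0 : 0 ≤ x := le_trans ha hx.1
    have hv : 0 < 1 - x ^ 2 := by nlinarith
    have hlog : 0 < Real.log (2 / (1 - x ^ 2)) := log_two_div_pos hv (by nlinarith)
    apply ContinuousAt.continuousWithinAt
    have hc : ContinuousAt (fun y : ℝ => 2 / (1 - y ^ 2)) x :=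
      (continuousAt_const.div (by fun_prop) hv.ne')
    have hlogc : ContinuousAt (fun y : ℝ => Real.log (2 / (1 - y ^ 2))) x :=
      (Real.continuousAt_log (by positivity)).comp hc
    exact ((hlogc.inv₀ hlog.ne').const_mul _).neg
  · -- x = 1
    subst hx1
    rw [← continuousWithinAt_diff_self]
    rw [ContinuousWithinAt]
    have hval : -(2⁻¹ * (Real.log (2 / (1 - (1:ℝ) ^ 2)))⁻¹) = 0 := by norm_num
    rw [hval]
    have t1 : Tendsto (fun y : ℝ => 1 - y ^ 2) (𝓝[Set.Icc a 1 \ {1}] 1) (𝓝[>] 0) := by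
      apply tendsto_nhdsWithin_of_tendsto_nhds_of_eventually_within
      · have hc : Continuous fun y : ℝ => 1 - y ^ 2 := by fun_prop
        have := (hc.tendsto 1).mono_left (nhdsWithin_le_nhds (s := Set.Icc a 1 \ {1}))
        simpa using this
      · filter_upwards [self_mem_nhdsWithin] with y hy
        obtain ⟨⟨hya, hy1⟩, hne⟩ := hy
        have hylt : y < 1 := lt_of_le_of_ne hy1 (by simpa using hne)
        have hy0 : 0 ≤ y := le_trans ha hya
        have : 0 < 1 - y ^ 2 := by nlinarith
        simpa using this
    have t2 : Tendsto (fun y : ℝ => 2 / (1 - y ^ 2)) (𝓝[Set.Icc a 1 \ {1}] 1) atTop := by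
      simp only [div_eq_mul_inv]
      exact (t1.inv_tendsto_nhdsGT_zero).const_mul_atTop two_pos
    have t3 : Tendsto (fun y : ℝ => Real.log (2 / (1 - y ^ 2))) (𝓝[Set.Icc a 1 \ {1}] 1) atTop :=
      Real.tendsto_log_atTop.comp t2
    have t4 : Tendsto (fun y : ℝ => (Real.log (2 / (1 - y ^ 2)))⁻¹) (𝓝[Set.Icc a 1 \ {1}] 1) (𝓝 0) :=
      tendsto_inv_atTop_zero.comp t3
    have := ((t4.const_mul (2⁻¹:ℝ)).neg)
    simpa using this

private lemma oneD {a : ℝ} (ha : 0 ≤ a) (ha1 : a < 1) :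
    ∫ x in Set.Ioo a 1, x * (1 / ((1 - x ^ 2) * (Real.log (2 / (1 - x ^ 2))) ^ 2))
      = 2⁻¹ * (Real.log (2 / (1 - a ^ 2)))⁻¹ := by
  set u : ℝ → ℝ := fun x => x * (1 / ((1 - x ^ 2) * (Real.log (2 / (1 - x ^ 2))) ^ 2)) with hu
  set G : ℝ → ℝ := fun y => -(2⁻¹ * (Real.log (2 / (1 - y ^ 2)))⁻¹) with hG
  have hderiv : ∀ x ∈ Set.Ioo a 1, HasDerivAt G (u x) x := fun x hx =>
    key_hasDeriv (le_trans ha hx.1.le) hx.2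
  have hpos : ∀ x ∈ Set.Ioo a 1, 0 ≤ u x := by
    intro x hx
    have hx0 : 0 ≤ x := le_trans ha hx.1.le
    have hv : (0:ℝ) < 1 - x ^ 2 := by nlinarith [hx.2]
    have : (0:ℝ) ≤ 1 / ((1 - x ^ 2) * (Real.log (2 / (1 - x ^ 2))) ^ 2) := by positivity
    exact mul_nonneg hx0 this
  have hint : IntervalIntegrable u volume a 1 := by
    apply intervalIntegral.intervalIntegrable_deriv_of_nonneg (g := G)
    · rw [Set.uIcc_of_le ha1.le]; exact key_cont ha
    · simpa [min_eq_left ha1.le, max_eq_right ha1.le] using hderiv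
    · simpa [min_eq_left ha1.le, max_eq_right ha1.le] using hpos
  have hftc := intervalIntegral.integral_eq_sub_of_hasDeriv_right_of_le ha1.le (key_cont ha)
    (fun x hx => (hderiv x hx).hasDerivWithinAt) hint
  have h1 : G 1 = 0 := by norm_num [hG]
  have h2 : G a = -(2⁻¹ * (Real.log (2 / (1 - a ^ 2)))⁻¹) := rfl
  rw [← MeasureTheory.integral_Ioc_eq_integral_Ioo, ← intervalIntegral.integral_of_le ha1.le,
    hftc]
  norm_num

private def phi (w : ℂ) : ℂ := (w.re : ℂ) * Complex.exp (w.im * Complex.I)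

private def phiD (w : ℂ) : ℂ →L[ℝ] ℂ :=
  (w.re : ℂ) • (Complex.exp (w.im * Complex.I) • (Complex.imCLM.smulRight Complex.I)) +
    (Complex.ofRealCLM.comp Complex.reCLM).smulRight (Complex.exp (w.im * Complex.I))

private lemma phi_hasFDeriv (w : ℂ) : HasFDerivAt phi (phiD w) w := by
  have hB : (fun w : ℂ => (w.im : ℂ) * Complex.I) = ⇑(Complex.imCLM.smulRight Complex.I) := by
    funext v
    simp [Complex.real_smul]
  have hc : HasFDerivAt (fun w : ℂ => (w.re : ℂ))
      (Complex.ofRealCLM.comp Complex.reCLM) w :=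
    (Complex.ofRealCLM.comp Complex.reCLM).hasFDerivAt
  have hg : HasFDerivAt (fun w : ℂ => (w.im : ℂ) * Complex.I)
      (Complex.imCLM.smulRight Complex.I) w := by
    rw [hB]; exact (Complex.imCLM.smulRight Complex.I).hasFDerivAt
  have hd : HasFDerivAt (fun w : ℂ => Complex.exp ((w.im : ℂ) * Complex.I))
      (Complex.exp ((w.im : ℂ) * Complex.I) • (Complex.imCLM.smulRight Complex.I)) w :=
    (Complex.hasDerivAt_exp _).comp_hasFDerivAt w hg
  exact hc.mul' hd

private lemma phiD_det (w : ℂ) : (phiD w).det = w.re := by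
  have h := LinearMap.det_toMatrix Complex.basisOneI ((phiD w) : ℂ →ₗ[ℝ] ℂ)
  rw [ContinuousLinearMap.det, ← h, Matrix.det_fin_two]
  simp [LinearMap.toMatrix_apply, Complex.coe_basisOneI_repr, Complex.coe_basisOneI, phiD,
    Complex.real_smul, Complex.exp_ofReal_mul_I_re, Complex.exp_ofReal_mul_I_im]
  linear_combination w.re * (Real.sin_sq_add_cos_sq w.im)

private def rect (I : Arc) : Set ℂ :=
  {w : ℂ | w.re ∈ Set.Ioo (1 - I.len / (2 * Real.pi)) 1 ∧
    w.im ∈ Set.Ioo (I.center - I.len / 2) (I.center + I.len / 2)}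

private lemma rect_measurable (I : Arc) : MeasurableSet (rect I) :=
  (measurableSet_Ioo.preimage Complex.measurable_re).inter
    (measurableSet_Ioo.preimage Complex.measurable_im)

private lemma a_nonneg (I : Arc) : 0 ≤ 1 - I.len / (2 * Real.pi) := by
  have h := I.len_le
  have hπ : 0 < 2 * Real.pi := by positivity
  have : I.len / (2 * Real.pi) ≤ 1 := by
    rw [div_le_one hπ]; exact h
  linarith

private lemma phi_inj (I : Arc) : Set.InjOn phi (rect I) := by
  intro w1 h1 w2 h2 heq
  have h10 : 0 < w1.re := lt_of_le_of_lt (a_nonneg I) h1.1.1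
  have h20 : 0 < w2.re := lt_of_le_of_lt (a_nonneg I) h2.1.1
  have habs : w1.re = w2.re := by
    have := congrArg (fun z : ℂ => ‖z‖) heq
    simpa [phi, Complex.norm_exp_ofReal_mul_I, abs_of_pos h10, abs_of_pos h20] using this
  have hexp : Complex.exp (w1.im * Complex.I) = Complex.exp (w2.im * Complex.I) := by
    have hne : (w1.re : ℂ) ≠ 0 := Complex.ofReal_ne_zero.mpr h10.ne'
    have := heq
    rw [phi, phi, ← habs] at this
    exact mul_left_cancel₀ hne this
  rw [Complex.exp_eq_exp_iff_exists_int] at hexp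
  obtain ⟨n, hn⟩ := hexp
  have him : w1.im = w2.im + n * (2 * Real.pi) := by
    have := congrArg Complex.im hn
    simpa [Complex.ofReal_mul] using this
  have hsmall : |w1.im - w2.im| < 2 * Real.pi := by
    rw [abs_sub_lt_iff]
    obtain ⟨_, hi1⟩ := h1
    obtain ⟨_, hi2⟩ := h2
    have hl := I.len_le
    constructor <;> [skip; skip] <;>
      · simp only [Set.mem_Ioo] at hi1 hi2; linarith [hi1.1, hi1.2, hi2.1, hi2.2]
  have hn0 : n = 0 := by
    by_contra hne
    have h1n : (1:ℝ) ≤ |(n:ℝ)| := by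
      have : n ≠ 0 := hne
      calc (1:ℝ) = ((1:ℤ):ℝ) := by norm_num
      _ ≤ |(n:ℝ)| := by
          rw [← Int.cast_abs]
          exact_mod_cast Int.one_le_abs (by omega)
    have : |w1.im - w2.im| = |(n:ℝ)| * (2 * Real.pi) := by
      rw [him]; rw [show w2.im + n * (2*Real.pi) - w2.im = n * (2*Real.pi) by ring]
      rw [abs_mul, abs_of_pos (by positivity : (0:ℝ) < 2 * Real.pi)]
    rw [this] at hsmall
    nlinarith [Real.pi_pos]
  apply Complex.ext habs
  simp [hn0] at him
  exact him

private lemma box_eq (I : Arc) : I.box = phi '' rect I := by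
  ext z
  constructor
  · rintro ⟨r, t, h1, h2, h3, rfl⟩
    refine ⟨⟨r, t⟩, ⟨⟨h1, h2⟩, ?_⟩, ?_⟩
    · rw [abs_sub_lt_iff] at h3
      constructor <;> [skip; skip] <;> simp <;> linarith [h3.1, h3.2]
    · simp [phi, Complex.ofReal]
  · rintro ⟨w, ⟨⟨ha, hb⟩, hc⟩, rfl⟩
    refine ⟨w.re, w.im, ha, hb, ?_, rfl⟩
    rw [abs_sub_lt_iff]
    simp only [Set.mem_Ioo] at hc
    constructor <;> linarith [hc.1, hc.2]

private lemma box_integral (I : Arc) :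
    ∫ z in I.box, 1 / ((1 - ‖z‖ ^ 2) * (Real.log (2 / (1 - ‖z‖ ^ 2))) ^ 2)
      = (∫ x in Set.Ioo (1 - I.len / (2 * Real.pi)) 1,
          x * (1 / ((1 - x ^ 2) * (Real.log (2 / (1 - x ^ 2))) ^ 2))) * I.len := by
  rw [box_eq, integral_image_eq_integral_abs_det_fderiv_smul volume (rect_measurable I)
    (fun w _ => (phi_hasFDeriv w).hasFDerivWithinAt) (phi_inj I)]
  have hcongr : ∀ w ∈ rect I,
      |(phiD w).det| • (1 / ((1 - ‖phi w‖ ^ 2) * (Real.log (2 / (1 - ‖phi w‖ ^ 2))) ^ 2))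
        = w.re * (1 / ((1 - w.re ^ 2) * (Real.log (2 / (1 - w.re ^ 2))) ^ 2)) := by
    intro w hw
    have h0 : 0 < w.re := lt_of_le_of_lt (a_nonneg I) hw.1.1
    have hnorm : ‖phi w‖ = w.re := by
      rw [phi]
      rw [norm_mul]
      simp [Complex.norm_exp_ofReal_mul_I, Complex.norm_real, abs_of_pos h0]
    rw [phiD_det, hnorm, abs_of_pos h0, smul_eq_mul]
  rw [setIntegral_congr_fun (rect_measurable I) hcongr]
  -- now transfer to ℝ × ℝ
  have hrect : rect I = Complex.measurableEquivRealProd ⁻¹'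
      ((Set.Ioo (1 - I.len / (2 * Real.pi)) 1) ×ˢ
        (Set.Ioo (I.center - I.len / 2) (I.center + I.len / 2))) := rfl
  rw [hrect]
  have key := Complex.volume_preserving_equiv_real_prod.setIntegral_preimage_emb
    Complex.measurableEquivRealProd.measurableEmbedding
    (fun p : ℝ × ℝ => p.1 * (1 / ((1 - p.1 ^ 2) * (Real.log (2 / (1 - p.1 ^ 2))) ^ 2)))
    ((Set.Ioo (1 - I.len / (2 * Real.pi)) 1) ×ˢ
      (Set.Ioo (I.center - I.len / 2) (I.center + I.len / 2)))
  refine key.trans ?_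
  have h2 := setIntegral_prod_mul (μ := (volume : Measure ℝ)) (ν := (volume : Measure ℝ))
    (fun x : ℝ => x * (1 / ((1 - x ^ 2) * (Real.log (2 / (1 - x ^ 2))) ^ 2)))
    (fun _ : ℝ => (1:ℝ))
    (Set.Ioo (1 - I.len / (2 * Real.pi)) 1)
    (Set.Ioo (I.center - I.len / 2) (I.center + I.len / 2))
  simp only [mul_one] at h2
  rw [Measure.volume_eq_prod, h2, setIntegral_const, Real.volume_real_Ioo,
    show I.center + I.len / 2 - (I.center - I.len / 2) = I.len by ring,
    max_eq_left I.len_pos.le, smul_eq_mul, mul_one]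

private lemma final_num (I : Arc) :
    2⁻¹ * (Real.log (2 / (1 - (1 - I.len / (2 * Real.pi)) ^ 2)))⁻¹
      ≤ 1 / Real.log (4 * Real.pi / I.len) := by
  have hπ := Real.pi_pos
  have hL0 := I.len_pos
  set h0 := I.len / (2 * Real.pi) with hh0
  have h00 : 0 < h0 := by positivity
  have h01 : h0 ≤ 1 := by
    rw [hh0, div_le_one (by positivity)]; exact I.len_le
  have hq : 1 - (1 - h0) ^ 2 = h0 * (2 - h0) := by ring
  rw [hq]
  have hq0 : 0 < h0 * (2 - h0) := by nlinarith
  have hq1 : h0 * (2 - h0) ≤ 1 := by nlinarith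
  have hA : 0 < Real.log (2 / (h0 * (2 - h0))) := log_two_div_pos hq0 hq1
  have hA2 : Real.log 2 ≤ Real.log (2 / (h0 * (2 - h0))) := by
    apply Real.log_le_log (by norm_num)
    rw [le_div_iff₀ hq0]; nlinarith
  have h4 : 4 * Real.pi / I.len = 2 / h0 := by
    rw [hh0]; field_simp; ring
  rw [h4]
  have hB : 0 < Real.log (2 / h0) := log_two_div_pos h00 h01
  have hBle : Real.log (2 / h0) ≤ 2 * Real.log (2 / (h0 * (2 - h0))) := by
    have step1 : Real.log (2 / h0) ≤ Real.log (4 / (h0 * (2 - h0))) := by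
      apply Real.log_le_log (by positivity)
      rw [div_le_div_iff₀ h00 hq0]; nlinarith
    have step2 : Real.log (4 / (h0 * (2 - h0)))
        = Real.log 2 + Real.log (2 / (h0 * (2 - h0))) := by
      rw [← Real.log_mul (by norm_num) (by positivity)]
      congr 1; field_simp; ring
    linarith
  rw [one_div, show (2:ℝ)⁻¹ * (Real.log (2 / (h0 * (2 - h0))))⁻¹
      = (2 * Real.log (2 / (h0 * (2 - h0))))⁻¹ by rw [mul_inv]]
  exact inv_anti₀ hB hBle

/-- The direct calculation:
`(1/|I|) ∬_{S(I)} dm(z) / ((1-|z|²) log²(2/(1-|z|²))) ≤ c / log(4π/|I|)`. -/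
theorem stmt_6 : ∃ c > (0:ℝ), ∀ I : Arc,
    (I.len)⁻¹ * ∫ z in I.box,
        1 / ((1 - ‖z‖ ^ 2) * (Real.log (2 / (1 - ‖z‖ ^ 2))) ^ 2) ≤
      c / Real.log (4 * Real.pi / I.len) := by
  refine ⟨1, one_pos, fun I => ?_⟩
  have hπ := Real.pi_pos
  have hL0 := I.len_pos
  have ha : (0:ℝ) ≤ 1 - I.len / (2 * Real.pi) := a_nonneg I
  have ha1 : 1 - I.len / (2 * Real.pi) < 1 := by
    have : 0 < I.len / (2 * Real.pi) := by positivity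
    linarith
  rw [box_integral I, oneD ha ha1, mul_comm (2⁻¹ * _) I.len, ← mul_assoc,
    inv_mul_cancel₀ hL0.ne', one_mul, one_div]
  simpa using final_num I
end
end

section
/- Let (x_k) be a sequence of nonzero real numbers with |x_{k+1}| ≤ |x_k|/2 for all k, and let (y_k) be a sequence of positive real numbers. Then for every index n: Σ_{k ≠ n} y_k / ((x_n − x_k)² + y_n²) ≤ 4·Σ_{k} y_k / x_k² (where the sums range over all indices k ≥ 1, the left one excluding k = n). -/
open MeasureTheory Real Complex Filter
open scoped Topology

noncomputable section

/-- `G_ψ(z) = (1/(πi)) ∫_ℝ ψ(t)/(z - t) dt`, the analytic extension `ψ + iHψ`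
of an integrable `ψ : ℝ → ℝ` to the upper half-plane. -/
noncomputable def UHG (ψ : ℝ → ℝ) (z : ℂ) : ℂ :=
  ((Real.pi : ℂ) * Complex.I)⁻¹ • ∫ t : ℝ, ((ψ t : ℂ) / (z - (t : ℂ)))

/-- The hypotheses on the bump function `φ`: measurable, odd, `0 ≤ φ ≤ 1` on `(0,∞)`,
`φ = 1` on `(0,1]` and `φ = 0` on `[2,∞)`. -/
def IsPhi (φ : ℝ → ℝ) : Prop :=
  Measurable φ ∧ (∀ x : ℝ, φ (-x) = - φ x) ∧ (∀ x : ℝ, 0 < x → 0 ≤ φ x ∧ φ x ≤ 1) ∧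
    (∀ x : ℝ, 0 < x → x ≤ 1 → φ x = 1) ∧ (∀ x : ℝ, 2 ≤ x → φ x = 0)

lemma mono_abs (x : ℕ → ℝ) (hxhalf : ∀ k, |x (k + 1)| ≤ |x k| / 2) :
    ∀ k m, k < m → |x m| ≤ |x k| / 2 := by
  intro k m hkm
  induction m with
  | zero => omega
  | succ m ih =>
    rcases Nat.lt_succ_iff_lt_or_eq.mp hkm with h | h
    · calc |x (m+1)| ≤ |x m| / 2 := hxhalf m
        _ ≤ (|x k| / 2) / 2 := by linarith [ih h]
        _ ≤ |x k| / 2 := by linarith [abs_nonneg (x k)]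
    · subst h; exact hxhalf k

lemma key (x : ℕ → ℝ) (hxhalf : ∀ k, |x (k + 1)| ≤ |x k| / 2)
    (n k : ℕ) (hk : k ≠ n) : |x k| / 2 ≤ |x n - x k| := by
  rcases lt_or_gt_of_ne hk with h | h
  · have h1 := mono_abs x hxhalf k n h
    calc |x k| / 2 = |x k| - |x k| / 2 := by ring
      _ ≤ |x k| - |x n| := by linarith
      _ ≤ |x k - x n| := by
          have := abs_sub_abs_le_abs_sub (x k) (x n); linarith [le_abs_self (x k - x n)]
      _ = |x n - x k| := abs_sub_comm _ _
  · have h1 := mono_abs x hxhalf n k h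
    have h2 : |x k| ≤ |x n| - |x k| := by linarith
    calc |x k| / 2 ≤ |x n| - |x k| := by linarith [abs_nonneg (x k)]
      _ ≤ |x n - x k| := abs_sub_abs_le_abs_sub _ _


/-- The summation estimate: if `|x (k+1)| ≤ |x k|/2` and `y k > 0`, then for every `n`,
`Σ_{k ≠ n} y k / ((x n - x k)² + (y n)²) ≤ 4 Σ_k y k / (x k)²` (sums in `[0, ∞]`). -/
theorem stmt_13 (x y : ℕ → ℝ) (hx0 : ∀ k, x k ≠ 0)
    (hxhalf : ∀ k, |x (k + 1)| ≤ |x k| / 2) (hy : ∀ k, 0 < y k) :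
    ∀ n : ℕ,
      (∑' k : ℕ, ENNReal.ofReal
          (if k = n then 0 else y k / ((x n - x k) ^ 2 + (y n) ^ 2))) ≤
        4 * ∑' k : ℕ, ENNReal.ofReal (y k / (x k) ^ 2) := by
  intro n
  rw [← ENNReal.tsum_mul_left]
  apply ENNReal.tsum_le_tsum
  intro k
  by_cases hk : k = n
  · simp [hk]
  · simp only [hk, if_false]
    have h4 : (4 : ENNReal) = ENNReal.ofReal 4 := by norm_num
    rw [h4, ← ENNReal.ofReal_mul (by norm_num)]
    apply ENNReal.ofReal_le_ofReal
    have hxk : (0:ℝ) < (x k)^2 := by have := hx0 k; positivity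
    have hd : (x k)^2 / 4 ≤ (x n - x k)^2 + (y n)^2 := by
      have := key x hxhalf n k hk
      have h1 : ((x k)/2)^2 ≤ (x n - x k)^2 := by
        have := _root_.sq_abs (x n - x k)
        nlinarith [abs_nonneg (x k), _root_.sq_abs (x k)]
      nlinarith [sq_nonneg (y n)]
    have : y k / ((x n - x k)^2 + (y n)^2) ≤ y k / ((x k)^2 / 4) := by
      apply div_le_div_of_nonneg_left (hy k).le (by positivity) hd
    calc y k / ((x n - x k)^2 + (y n)^2) ≤ y k / ((x k)^2 / 4) := this
      _ = 4 * (y k / (x k)^2) := by field_simp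
end
end

section
/- Let (x_n), (y_n) be real sequences with y_n > 0, y_n → 0 and x_n → 0. Then there exists a measurable, compactly supported function ψ : ℝ → ℝ with |ψ(x)| ≤ 1 for all x ∈ ℝ such that limsup_{n→∞} |G_ψ(x_n + i·y_n)| / log(1/y_n) ≥ 1/π, where G_ψ(z) = (1/(πi))∫_ℝ ψ(t)/(z − t) dt for z ∈ ℍ. (Since ψ ∈ L^∞(ℝ), the function G_ψ = ψ + iHψ belongs to BMOA of the upper half-plane; this is the construction of the function g in the proof of the main theorem.) -/
open MeasureTheory Real Complex Filter
open scoped Topology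
open Set

noncomputable section

/-- the kernel (real part of 1/(z-t)) -/
def Kk (u b t : ℝ) : ℝ := (u - t) / ((u - t)^2 + b^2)

/-- sharp odd bump centered at a with radius r -/
def bup (a r : ℝ) : ℝ → ℝ := fun t =>
  (Set.Ioc a (a+r)).indicator (fun _ => (1:ℝ)) t - (Set.Ico (a-r) a).indicator (fun _ => (1:ℝ)) t

lemma measurable_bup (a r : ℝ) : Measurable (bup a r) := by
  exact ((measurable_const.indicator measurableSet_Ioc).sub
    (measurable_const.indicator measurableSet_Ico))

lemma abs_bup_le (a r t : ℝ) : |bup a r t| ≤ 1 := by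
  unfold bup Set.indicator
  split_ifs with h1 h2 h2 <;> simp only [Set.mem_Ioc, Set.mem_Ico] at * <;>
    [skip; norm_num; norm_num; norm_num]
  exfalso; linarith [h1.1, h2.2]

lemma bup_eq_zero (a r t : ℝ) (h : t ∉ Set.Icc (a-r) (a+r)) : bup a r t = 0 := by
  simp only [Set.mem_Icc, not_and_or, not_le] at h
  have h1 : t ∉ Set.Ioc a (a+r) := fun hm => by
    simp only [Set.mem_Ioc] at hm; rcases h with h | h <;> linarith [hm.1, hm.2]
  have h2 : t ∉ Set.Ico (a-r) a := fun hm => by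
    simp only [Set.mem_Ico] at hm; rcases h with h | h <;> linarith [hm.1, hm.2]
  unfold bup
  rw [Set.indicator_of_notMem h1, Set.indicator_of_notMem h2, sub_zero]

lemma Kk_cont (u b : ℝ) (hb : b ≠ 0) : Continuous (Kk u b) := by
  apply Continuous.div (by continuity) (by continuity)
  intro t
  positivity

lemma abs_Kk_le (u b t : ℝ) (hb : 0 < b) : |Kk u b t| ≤ 1/(2*b) := by
  unfold Kk
  rw [abs_div, abs_of_pos (by positivity : (0:ℝ) < (u-t)^2 + b^2),
    div_le_div_iff₀ (by positivity) (by positivity)]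
  nlinarith [sq_nonneg (|u - t| - b), abs_nonneg (u-t), _root_.sq_abs (u - t)]

lemma abs_Kk_le' (u b t d : ℝ) (hd : 0 < d) (h : d ≤ |u - t|) : |Kk u b t| ≤ 1/d := by
  unfold Kk
  have h1 : (0:ℝ) < |u - t| := lt_of_lt_of_le hd h
  have h2 : (0:ℝ) < (u-t)^2 + b^2 := by nlinarith [_root_.sq_abs (u - t), sq_nonneg b]
  rw [abs_div, abs_of_pos h2, div_le_div_iff₀ h2 hd]
  nlinarith [_root_.sq_abs (u - t), sq_nonneg b]

/-- integrability of a bounded compactly supported measurable function -/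
lemma integrable_of_bdd_supp {f : ℝ → ℝ} (hf : Measurable f) (R c : ℝ)
    (hbd : ∀ t, |f t| ≤ c) (hsupp : ∀ t, t ∉ Set.Icc (-R) R → f t = 0) :
    Integrable f := by
  apply Integrable.mono' (g := (Set.Icc (-R) R).indicator (fun _ => c))
  · exact (integrable_indicator_iff measurableSet_Icc).2
      (integrableOn_const measure_Icc_lt_top.ne)
  · exact hf.aestronglyMeasurable
  · refine Filter.Eventually.of_forall (fun t => ?_)
    by_cases ht : t ∈ Set.Icc (-R) R
    · rw [Set.indicator_of_mem ht]; exact hbd t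
    · rw [Set.indicator_of_notMem ht, hsupp t ht]; simp

/-- bound on an integral of a function supported in [l,r] and bounded by c there -/
lemma abs_integral_le {f : ℝ → ℝ} (l r c : ℝ) (hlr : l ≤ r)
    (hsupp : ∀ t, t ∉ Set.Icc l r → f t = 0) (hbd : ∀ t ∈ Set.Icc l r, |f t| ≤ c) :
    |∫ t, f t| ≤ (r - l) * c := by
  have hfi : f = (Set.Icc l r).indicator f := by
    funext t
    by_cases ht : t ∈ Set.Icc l r
    · rw [Set.indicator_of_mem ht]
    · rw [Set.indicator_of_notMem ht, hsupp t ht]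
  rw [hfi, integral_indicator measurableSet_Icc]
  have := norm_setIntegral_le_of_norm_le_const (μ := volume) (s := Set.Icc l r) (f := f) (C := c)
    (by rw [Real.volume_Icc]; exact ENNReal.ofReal_lt_top) (fun t ht => hbd t ht)
  rw [Real.volume_real_Icc_of_le hlr] at this
  calc |∫ t in Set.Icc l r, f t| ≤ c * (r - l) := this
    _ = (r - l) * c := mul_comm _ _

lemma hasDerivAt_F (u b : ℝ) (hb : 0 < b) (t : ℝ) :
    HasDerivAt (fun s => -(1/2) * Real.log ((u - s)^2 + b^2)) (Kk u b t) t := by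
  have h1 : HasDerivAt (fun s : ℝ => (u - s)^2 + b^2) (2 * (u - t) * (-1)) t := by
    have : HasDerivAt (fun s : ℝ => u - s) (-1) t := (hasDerivAt_id t).const_sub u
    simpa using ((this.pow 2).add_const (b^2))
  have h2 : (u - t)^2 + b^2 ≠ 0 := by positivity
  have := (h1.log h2).const_mul (-(1/2) : ℝ)
  refine this.congr_deriv ?_
  unfold Kk
  field_simp

lemma integral_bup_mul_Kk (a r u b : ℝ) (hb : 0 < b) (hr : 0 ≤ r) :
    ∫ t, bup a r t * Kk u b t
      = Real.log ((u - a)^2 + b^2) - (1/2) * Real.log ((u - a - r)^2 + b^2)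
        - (1/2) * Real.log ((u - a + r)^2 + b^2) := by
  have hKi : ∀ (p q : ℝ), IntervalIntegrable (Kk u b) volume p q :=
    fun p q => (Kk_cont u b (ne_of_gt hb)).intervalIntegrable p q
  have hftc : ∀ (p q : ℝ), ∫ t in p..q, Kk u b t
      = -(1/2) * Real.log ((u - q)^2 + b^2) + (1/2) * Real.log ((u - p)^2 + b^2) := by
    intro p q
    rw [intervalIntegral.integral_eq_sub_of_hasDerivAt
      (fun s _ => hasDerivAt_F u b hb s) (hKi p q)]
    ring
  have key : (fun t => bup a r t * Kk u b t)
      = fun t => (Set.Ioc a (a+r)).indicator (Kk u b) t - (Set.Ico (a-r) a).indicator (Kk u b) t := by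
    funext t
    by_cases h1 : t ∈ Set.Ioc a (a+r) <;> by_cases h2 : t ∈ Set.Ico (a-r) a <;>
      simp [bup, Set.indicator, h1, h2]
  have hIoc : Integrable ((Set.Ioc a (a+r)).indicator (Kk u b)) := by
    rw [integrable_indicator_iff measurableSet_Ioc]
    exact (Kk_cont u b (ne_of_gt hb)).integrableOn_Ioc
  have hIco : Integrable ((Set.Ico (a-r) a).indicator (Kk u b)) := by
    rw [integrable_indicator_iff measurableSet_Ico]
    exact ((Kk_cont u b (ne_of_gt hb)).integrableOn_Icc).mono_set Set.Ico_subset_Icc_self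
  rw [key, integral_sub hIoc hIco, integral_indicator measurableSet_Ioc,
    integral_indicator measurableSet_Ico, MeasureTheory.integral_Ico_eq_integral_Ioo,
    ← MeasureTheory.integral_Ioc_eq_integral_Ioo,
    ← intervalIntegral.integral_of_le (by linarith : a ≤ a + r),
    ← intervalIntegral.integral_of_le (by linarith : a - r ≤ a),
    hftc, hftc]
  have e1 : u - (a + r) = u - a - r := by ring
  have e2 : u - (a - r) = u - a + r := by ring
  rw [e1, e2]
  ring

/-- lower bound on the norm of UHG via the real-part integral -/
lemma norm_UHG_ge (ψ : ℝ → ℝ) (hm : Measurable ψ) (R c : ℝ) (hc : 0 ≤ c)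
    (hbd : ∀ t, |ψ t| ≤ c) (hsupp : ∀ t, t ∉ Set.Icc (-R) R → ψ t = 0)
    (z : ℂ) (hz : 0 < z.im) :
    π⁻¹ * |∫ t, ψ t * Kk z.re z.im t| ≤ ‖UHG ψ z‖ := by
  set g : ℝ → ℂ := fun t => (ψ t : ℂ) / (z - (t : ℂ)) with hg
  have hglb : ∀ t, ‖g t‖ ≤ ((Set.Icc (-R) R).indicator (fun _ => c / z.im)) t := by
    intro t
    have hzt : z.im ≤ ‖z - (t:ℂ)‖ := by
      have : |(z - (t:ℂ)).im| ≤ ‖z - (t:ℂ)‖ := Complex.abs_im_le_norm _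
      simpa [abs_of_pos hz] using this
    by_cases ht : t ∈ Set.Icc (-R) R
    · rw [Set.indicator_of_mem ht]
      show ‖(ψ t : ℂ) / (z - (t:ℂ))‖ ≤ c / z.im
      rw [norm_div, Complex.norm_real, Real.norm_eq_abs]
      exact div_le_div₀ hc (hbd t) hz hzt
    · rw [Set.indicator_of_notMem ht]
      show ‖(ψ t : ℂ) / (z - (t:ℂ))‖ ≤ 0
      rw [hsupp t ht]
      simp
  have hgm : AEStronglyMeasurable g volume := by
    apply Measurable.aestronglyMeasurable
    exact (Complex.measurable_ofReal.comp hm).div (measurable_const.sub Complex.measurable_ofReal)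
  have hgi : Integrable g := by
    apply Integrable.mono' (g := (Set.Icc (-R) R).indicator (fun _ => c / z.im))
    · exact (integrable_indicator_iff measurableSet_Icc).2
        (integrableOn_const measure_Icc_lt_top.ne)
    · exact hgm
    · exact Filter.Eventually.of_forall hglb
  have hre : ∀ t, (g t).re = ψ t * Kk z.re z.im t := by
    intro t
    rw [hg]
    simp only [Complex.div_re, Complex.sub_re, Complex.ofReal_re, Complex.ofReal_im,
      Complex.sub_im, Complex.normSq_apply]
    unfold Kk
    ring
  have hint : ∫ t, ψ t * Kk z.re z.im t = (∫ t, g t).re := by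
    have h3 := integral_re hgi
    simp only [RCLike.re_to_complex] at h3
    rw [← h3]
    congr 1
    funext t
    exact (hre t).symm
  have h1 : |(∫ t, g t).re| ≤ ‖∫ t, g t‖ := Complex.abs_re_le_norm _
  have h2 : ‖UHG ψ z‖ = π⁻¹ * ‖∫ t, g t‖ := by
    unfold UHG
    rw [norm_smul]
    congr 1
    rw [norm_inv]
    have : ‖(Real.pi : ℂ) * Complex.I‖ = π := by
      simp [_root_.abs_of_nonneg Real.pi_pos.le]
    rw [this]
  rw [h2, hint]
  have : (0:ℝ) ≤ π⁻¹ := by positivity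
  exact mul_le_mul_of_nonneg_left h1 this

set_option maxHeartbeats 1000000 in
lemma case1 (x y : ℕ → ℝ) (hy : ∀ n, 0 < y n)
    (hyev : ∀ δ : ℝ, 0 < δ → ∀ᶠ n in atTop, y n < δ)
    (hc : ∃ᶠ n in atTop, (x n)^2 ≤ y n) :
    ∃ ψ : ℝ → ℝ, Measurable ψ ∧ HasCompactSupport ψ ∧ (∀ s : ℝ, |ψ s| ≤ 1) ∧
      ∀ ε > (0:ℝ), ∃ᶠ n in atTop,
        1 / Real.pi - ε ≤
          ‖UHG ψ ((x n : ℂ) + (y n : ℂ) * Complex.I)‖ / Real.log (1 / y n) := by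
  refine ⟨bup 0 1, measurable_bup 0 1, ?_, abs_bup_le 0 1, ?_⟩
  · exact HasCompactSupport.intro isCompact_Icc
      (fun t ht => bup_eq_zero 0 1 t (by simpa using ht))
  intro ε hε
  set C : ℝ := Real.log 8 with hC
  have hCpos : 0 < C := Real.log_pos (by norm_num)
  set δ : ℝ := min (1/4) (Real.exp (-(C/(π * ε)))) with hδdef
  have hδ : 0 < δ := lt_min (by norm_num) (Real.exp_pos _)
  refine (hc.and_eventually (hyev δ hδ)).mono ?_
  rintro n ⟨hub, hbδ⟩
  set u : ℝ := x n
  set b : ℝ := y n with hbdef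
  have hb : 0 < b := hy n
  have hb4 : b ≤ 1/4 := le_of_lt (lt_of_lt_of_le hbδ (min_le_left _ _))
  have hbe : b ≤ Real.exp (-(C/(π * ε))) := le_of_lt (lt_of_lt_of_le hbδ (min_le_right _ _))
  have hu : |u| ≤ 1/2 := by
    rw [abs_le]; constructor <;> nlinarith
  set z : ℂ := (u : ℂ) + (b : ℂ) * Complex.I with hz
  have hzre : z.re = u := by simp [hz]
  have hzim : z.im = b := by simp [hz]
  have hnorm := norm_UHG_ge (bup 0 1) (measurable_bup 0 1) 1 1 zero_le_one
    (abs_bup_le 0 1) (fun t ht => bup_eq_zero 0 1 t (by simpa using ht)) z (by rw [hzim]; exact hb)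
  rw [hzre, hzim] at hnorm
  have hI : ∫ t, bup 0 1 t * Kk u b t
      = Real.log (u^2 + b^2) - (1/2) * Real.log ((u - 1)^2 + b^2)
        - (1/2) * Real.log ((u + 1)^2 + b^2) := by
    have := integral_bup_mul_Kk 0 1 u b hb zero_le_one
    simpa using this
  set L : ℝ := Real.log (1 / b) with hLdef
  have hLeq : L = -Real.log b := by rw [hLdef, one_div, Real.log_inv]
  have hL : C / (π * ε) ≤ L := by
    rw [hLeq]
    have := Real.log_le_log hb hbe
    rw [Real.log_exp] at this
    linarith
  have hLpos : 0 < L := lt_of_lt_of_le (by positivity) hL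
  -- bound the integral
  have hIle : ∫ t, bup 0 1 t * Kk u b t ≤ Real.log b + C := by
    rw [hI]
    have h1 : Real.log (u^2 + b^2) ≤ Real.log (2*b) := by
      apply Real.log_le_log (by positivity)
      nlinarith
    have h2 : Real.log (2*b) = Real.log 2 + Real.log b :=
      Real.log_mul (by norm_num) (ne_of_gt hb)
    have h3 : -(1/2) * Real.log ((u - 1)^2 + b^2) ≤ Real.log 2 := by
      have : Real.log (1/4) ≤ Real.log ((u - 1)^2 + b^2) := by
        apply Real.log_le_log (by norm_num)
        have : |u| ≤ 1/2 := hu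
        rw [abs_le] at this
        nlinarith
      have h4 : Real.log (1/4) = -(2 * Real.log 2) := by
        rw [one_div, Real.log_inv]
        rw [show (4:ℝ) = 2^2 by norm_num, Real.log_pow]
        push_cast; ring
      linarith
    have h5 : -(1/2) * Real.log ((u + 1)^2 + b^2) ≤ Real.log 2 := by
      have : Real.log (1/4) ≤ Real.log ((u + 1)^2 + b^2) := by
        apply Real.log_le_log (by norm_num)
        have : |u| ≤ 1/2 := hu
        rw [abs_le] at this
        nlinarith
      have h4 : Real.log (1/4) = -(2 * Real.log 2) := by
        rw [one_div, Real.log_inv]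
        rw [show (4:ℝ) = 2^2 by norm_num, Real.log_pow]
        push_cast; ring
      linarith
    have h8 : C = 3 * Real.log 2 := by
      rw [hC, show (8:ℝ) = 2^3 by norm_num, Real.log_pow]
      push_cast; ring
    linarith
  have habs : L - C ≤ |∫ t, bup 0 1 t * Kk u b t| := by
    have h7 : -(∫ t, bup 0 1 t * Kk u b t) ≤ |∫ t, bup 0 1 t * Kk u b t| := neg_le_abs _
    have h6 : L - C ≤ -(∫ t, bup 0 1 t * Kk u b t) := by
      rw [hLeq]; linarith
    linarith
  have hG : π⁻¹ * (L - C) ≤ ‖UHG (bup 0 1) z‖ := by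
    refine le_trans ?_ hnorm
    apply mul_le_mul_of_nonneg_left habs (by positivity)
  rw [le_div_iff₀ hLpos]
  have hπ : 0 < π := Real.pi_pos
  rw [div_le_iff₀ (by positivity : (0:ℝ) < π * ε)] at hL
  have h10 : π⁻¹ * C ≤ ε * L := by
    have h11 := mul_le_mul_of_nonneg_left hL (inv_pos.mpr hπ).le
    have h12 : π⁻¹ * (L * (π * ε)) = ε * L := by field_simp
    linarith [h12.le, h12.ge]
  have e1 : (1/π - ε) * L = π⁻¹ * L - ε * L := by rw [one_div]; ring
  have e2 : π⁻¹ * (L - C) = π⁻¹ * L - π⁻¹ * C := by ring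
  linarith [hG]

lemma final_div (G L c ε : ℝ) (hG : π⁻¹ * (L - c) ≤ G) (hLpos : 0 < L)
    (hcε : c ≤ ε * π * L) : 1/π - ε ≤ G / L := by
  rw [le_div_iff₀ hLpos]
  have hπ : 0 < π := Real.pi_pos
  have h10 : π⁻¹ * c ≤ ε * L := by
    have h11 := mul_le_mul_of_nonneg_left hcε (inv_pos.mpr hπ).le
    have h12 : π⁻¹ * (ε * π * L) = ε * L := by field_simp
    linarith [h12.le, h12.ge]
  have e1 : (1/π - ε) * L = π⁻¹ * L - ε * L := by rw [one_div]; ring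
  have e2 : π⁻¹ * (L - c) = π⁻¹ * L - π⁻¹ * c := by ring
  linarith

lemma sq_le_four_pow (k : ℕ) : ((k:ℝ) + 1)^2 ≤ 4^k := by
  induction k with
  | zero => norm_num
  | succ k ih =>
    have hk : (0:ℝ) ≤ (k:ℝ) := Nat.cast_nonneg k
    push_cast
    push_cast at ih
    calc ((k:ℝ) + 1 + 1)^2 ≤ 4 * ((k:ℝ) + 1)^2 := by nlinarith
      _ ≤ 4 * 4^k := by linarith
      _ = 4^(k+1) := by ring

set_option maxHeartbeats 2000000 in
lemma case2 (x y : ℕ → ℝ) (hy : ∀ n, 0 < y n)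
    (hyev : ∀ δ : ℝ, 0 < δ → ∀ᶠ n in atTop, y n < δ)
    (hxev : ∀ δ : ℝ, 0 < δ → ∀ᶠ n in atTop, |x n| < δ)
    (hc : ∀ᶠ n in atTop, y n < (x n)^2) :
    ∃ ψ : ℝ → ℝ, Measurable ψ ∧ HasCompactSupport ψ ∧ (∀ s : ℝ, |ψ s| ≤ 1) ∧
      ∀ ε > (0:ℝ), ∃ᶠ n in atTop,
        1 / Real.pi - ε ≤
          ‖UHG ψ ((x n : ℂ) + (y n : ℂ) * Complex.I)‖ / Real.log (1 / y n) := by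
  -- threshold N₀
  obtain ⟨N₀, hN₀⟩ : ∃ N₀, ∀ n, N₀ ≤ n → y n < (x n)^2 ∧ |x n| ≤ 1 := by
    have h := (hc.and (hxev 1 one_pos))
    rw [eventually_atTop] at h
    obtain ⟨N, hN⟩ := h
    exact ⟨N, fun n hn => ⟨(hN n hn).1, le_of_lt (hN n hn).2⟩⟩
  have hxpos : ∀ n, N₀ ≤ n → 0 < |x n| := by
    intro n hn
    rcases eq_or_ne (x n) 0 with h0 | h0
    · exfalso; have := (hN₀ n hn).1; rw [h0] at this; simp at this; linarith [hy n]
    · exact abs_pos.mpr h0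
  -- one-step existence
  have hstep : ∀ (m : ℕ) (δ : ℝ), 0 < δ → ∃ n, m < n ∧ N₀ ≤ n ∧ |x n| ≤ δ ∧ y n ≤ δ := by
    intro m δ hδ
    have h1 := (hxev δ hδ).and (hyev δ hδ)
    rw [eventually_atTop] at h1
    obtain ⟨N, hN⟩ := h1
    refine ⟨max (m+1) (max N₀ N), ?_, ?_, ?_, ?_⟩
    · exact lt_of_lt_of_le (Nat.lt_succ_self m) (le_max_left _ _)
    · exact le_trans (le_max_left _ _) (le_max_right _ _)
    · exact le_of_lt (hN _ (le_trans (le_max_right _ _) (le_max_right _ _))).1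
    · exact le_of_lt (hN _ (le_trans (le_max_right _ _) (le_max_right _ _))).2
  -- step bound
  set Δ : ℕ → ℝ := fun m => min (min (|x m| / 8) (y m / 8)) ((y m)^4) with hΔdef
  have hΔpos : ∀ m, N₀ ≤ m → 0 < Δ m := by
    intro m hm
    have h1 := hxpos m hm
    have h2 := hy m
    exact lt_min (lt_min (by linarith) (by linarith)) (by positivity)
  have hg' : ∀ m : ℕ, ∃ n, m < n ∧ N₀ ≤ n ∧ (N₀ ≤ m → (|x n| ≤ Δ m ∧ y n ≤ Δ m)) := by
    intro m
    by_cases hm : N₀ ≤ m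
    · obtain ⟨n, h1, h2, h3, h4⟩ := hstep m (Δ m) (hΔpos m hm)
      exact ⟨n, h1, h2, fun _ => ⟨h3, h4⟩⟩
    · obtain ⟨n, h1, h2, _, _⟩ := hstep m 1 one_pos
      exact ⟨n, h1, h2, fun h' => absurd h' hm⟩
  choose g hg1 hg2 hg3 using hg'
  -- base point
  obtain ⟨n₀, hn₀N, hn₀y⟩ : ∃ n₀, N₀ ≤ n₀ ∧ y n₀ ≤ Real.exp (-1) := by
    have h1 := hyev (Real.exp (-1)) (Real.exp_pos _)
    rw [eventually_atTop] at h1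
    obtain ⟨N, hN⟩ := h1
    exact ⟨max N₀ N, le_max_left _ _, le_of_lt (hN _ (le_max_right _ _))⟩
  set sq : ℕ → ℕ := fun k => g^[k] n₀ with hsqdef
  have hsqsucc : ∀ k, sq (k+1) = g (sq k) := by
    intro k
    rw [hsqdef]
    exact Function.iterate_succ_apply' g k n₀
  have hseqN : ∀ k, N₀ ≤ sq k := by
    intro k
    induction k with
    | zero => exact hn₀N
    | succ k ih => rw [hsqsucc k]; exact hg2 (sq k)
  have hmono : ∀ k, sq k < sq (k+1) := fun k => by rw [hsqsucc k]; exact hg1 (sq k)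
  have hsq_ge : ∀ k, k ≤ sq k := by
    intro k
    induction k with
    | zero => exact Nat.zero_le _
    | succ k ih => exact Nat.succ_le_of_lt (lt_of_le_of_lt ih (hmono k))
  have hstep' : ∀ k, |x (sq (k+1))| ≤ Δ (sq k) ∧ y (sq (k+1)) ≤ Δ (sq k) := by
    intro k
    rw [hsqsucc k]
    exact hg3 (sq k) (hseqN k)
  -- abbreviations
  set A : ℕ → ℝ := fun k => |x (sq k)| with hAdef
  set B : ℕ → ℝ := fun k => y (sq k) with hBdef
  have hApos : ∀ k, 0 < A k := fun k => hxpos _ (hseqN k)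
  have hBpos : ∀ k, 0 < B k := fun k => hy _
  have hBA : ∀ k, B k < (A k)^2 := by
    intro k
    have := (hN₀ _ (hseqN k)).1
    rw [hAdef, hBdef]
    simpa [sq_abs] using this
  have hA1 : ∀ k, A k ≤ 1 := fun k => (hN₀ _ (hseqN k)).2
  have hA8 : ∀ k, A (k+1) ≤ A k / 8 := by
    intro k
    refine le_trans (hstep' k).1 ?_
    exact le_trans (min_le_left _ _) (min_le_left _ _)
  have hAB8 : ∀ k, A (k+1) ≤ B k / 8 := by
    intro k
    refine le_trans (hstep' k).1 ?_
    exact le_trans (min_le_left _ _) (min_le_right _ _)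
  have hB4 : ∀ k, B (k+1) ≤ (B k)^4 := by
    intro k
    exact le_trans (hstep' k).2 (min_le_right _ _)
  have hlogB : ∀ k, (4:ℝ)^k ≤ Real.log (1 / B k) := by
    intro k
    induction k with
    | zero =>
      have h1 := Real.log_le_log (hBpos 0) hn₀y
      rw [Real.log_exp] at h1
      rw [one_div, Real.log_inv]
      simpa using (by linarith : (1:ℝ) ≤ -Real.log (B 0))
    | succ k ih =>
      have h1 := Real.log_le_log (hBpos (k+1)) (hB4 k)
      rw [Real.log_pow] at h1
      rw [one_div, Real.log_inv] at *
      push_cast at h1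
      calc (4:ℝ)^(k+1) = 4 * 4^k := by ring
        _ ≤ 4 * (-Real.log (B k)) := by linarith
        _ ≤ -Real.log (B (k+1)) := by linarith
  have hAmono : ∀ j k, j ≤ k → A k ≤ A j := by
    intro j k hjk
    induction k with
    | zero => rw [Nat.le_zero.mp hjk]
    | succ k ih =>
      rcases Nat.lt_or_ge j (k+1) with h | h
      · have := ih (Nat.lt_succ_iff.mp h)
        have h8 := hA8 k
        have := hApos k
        linarith
      · rw [Nat.le_antisymm hjk h]
  have hA8' : ∀ j k, j < k → A k ≤ A j / 8 :=
    fun j k hjk => le_trans (hAmono (j+1) k hjk) (hA8 j)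
  -- the bumps and ψ
  set bmp : ℕ → ℝ → ℝ := fun k => bup (x (sq k)) (A k / 2) with hbmpdef
  set ψ : ℝ → ℝ := fun t => ∑' k, bmp k t with hψdef
  have hsupp_b : ∀ k t, bmp k t ≠ 0 → A k / 2 ≤ |t| ∧ |t| ≤ 3 * A k / 2 := by
    intro k t hne
    have hmem : t ∈ Set.Icc (x (sq k) - A k / 2) (x (sq k) + A k / 2) := by
      by_contra hmem
      exact hne (bup_eq_zero _ _ _ hmem)
    obtain ⟨h1, h2⟩ := hmem
    have h3 : |t - x (sq k)| ≤ A k / 2 := abs_le.mpr ⟨by linarith, by linarith⟩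
    constructor
    · have h4 : A k - |t| ≤ |t - x (sq k)| := by
        have := abs_sub_abs_le_abs_sub (x (sq k)) t
        rw [abs_sub_comm (x (sq k)) t] at this
        rw [hAdef]
        linarith [this]
      linarith
    · have h5 : |t| ≤ |x (sq k)| + |t - x (sq k)| := by
        have := abs_add_le (x (sq k)) (t - x (sq k))
        simpa using this
      rw [hAdef] at *
      linarith
  have hdisj : ∀ j k t, j < k → bmp k t ≠ 0 → bmp j t = 0 := by
    intro j k t hjk hk
    by_contra hj
    have h1 := hsupp_b k t hk
    have h2 := hsupp_b j t hj
    have h3 := hA8' j k hjk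
    have := hApos j
    linarith [h1.2, h2.1]
  -- pointwise structure of ψ
  have hψval : ∀ t, (ψ t = 0 ∧ ∀ j, bmp j t = 0) ∨
      (∃ j, ψ t = bmp j t ∧ ∀ i, i ≠ j → bmp i t = 0) := by
    intro t
    by_cases h : ∀ j, bmp j t = 0
    · left
      refine ⟨?_, h⟩
      rw [hψdef]
      simp only
      rw [show (fun k => bmp k t) = (fun _ => (0:ℝ)) from funext h]
      exact tsum_zero
    · right
      push_neg at h
      obtain ⟨j, hj⟩ := h
      have hz : ∀ i, i ≠ j → bmp i t = 0 := by
        intro i hij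
        rcases lt_or_gt_of_ne hij with h | h
        · exact hdisj i j t h hj
        · by_contra hi
          exact hj (hdisj j i t h hi)
      refine ⟨j, ?_, hz⟩
      rw [hψdef]
      simp only
      exact tsum_eq_single j hz
  have hψabs : ∀ t, |ψ t| ≤ 1 := by
    intro t
    rcases hψval t with ⟨h0, _⟩ | ⟨j, hj, _⟩
    · rw [h0]; norm_num
    · rw [hj]; exact abs_bup_le _ _ _
  have hψsupp : ∀ t, t ∉ Set.Icc (-(3/2) : ℝ) (3/2) → ψ t = 0 := by
    intro t ht
    have hall : ∀ j, bmp j t = 0 := by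
      intro j
      by_contra hj
      have h1 := (hsupp_b j t hj).2
      have h2 := hA1 j
      have : |t| ≤ 3/2 := by linarith
      rw [abs_le] at this
      exact ht (Set.mem_Icc.mpr ⟨by linarith [this.1], this.2⟩)
    rcases hψval t with ⟨h0, _⟩ | ⟨j, hj, _⟩
    · exact h0
    · rw [hj]; exact hall j
  have hψmeas : Measurable ψ := by
    apply measurable_of_tendsto_metrizable
      (f := fun N t => ∑ k ∈ Finset.range N, bmp k t)
      (fun N => Finset.measurable_sum _ (fun k _ => measurable_bup _ _))
    rw [tendsto_pi_nhds]
    intro t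
    have hsummable : Summable (fun k => bmp k t) := by
      rcases hψval t with ⟨_, h0⟩ | ⟨j, _, hz⟩
      · exact summable_zero.congr (fun i => (h0 i).symm)
      · exact summable_of_ne_finset_zero (s := {j}) (fun i hi => hz i (by simpa using hi))
    exact hsummable.hasSum.tendsto_sum_nat
  refine ⟨ψ, hψmeas, HasCompactSupport.intro isCompact_Icc (fun t ht => hψsupp t ht),
    hψabs, ?_⟩
  -- main estimate at step k
  have hbmp15 : ∀ (j : ℕ) (t : ℝ), t ∉ Set.Icc (-(3/2) : ℝ) (3/2) → bmp j t = 0 := by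
    intro j t ht
    by_contra hj
    have h1 := (hsupp_b j t hj).2
    have h2 := hA1 j
    have h3 : |t| ≤ 3/2 := by linarith
    rw [abs_le] at h3
    exact ht (Set.mem_Icc.mpr ⟨by linarith [h3.1], h3.2⟩)
  have hmain : ∀ k : ℕ, π⁻¹ * (Real.log (1 / B k) - (4*(k:ℝ) + 3)) ≤
      ‖UHG ψ ((x (sq k) : ℂ) + (B k : ℂ) * Complex.I)‖ := by
    intro k
    set u : ℝ := x (sq k) with hudef
    set b : ℝ := B k with hbdef2
    have hb : 0 < b := hBpos k
    set z : ℂ := (u : ℂ) + (b : ℂ) * Complex.I with hz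
    have hzre : z.re = u := by simp [hz]
    have hzim : z.im = b := by simp [hz]
    have hnorm := norm_UHG_ge ψ hψmeas (3/2) 1 zero_le_one hψabs hψsupp z
      (by rw [hzim]; exact hb)
    rw [hzre, hzim] at hnorm
    have hKmeas : Measurable (Kk u b) := (Kk_cont u b hb.ne').measurable
    have hbound_bmp : ∀ (j : ℕ) (t : ℝ), |bmp j t * Kk u b t| ≤ 1/(2*b) := by
      intro j t
      rw [abs_mul]
      calc |bmp j t| * |Kk u b t| ≤ 1 * (1/(2*b)) :=
        mul_le_mul (abs_bup_le _ _ _) (abs_Kk_le u b t hb) (abs_nonneg _) zero_le_one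
      _ = 1/(2*b) := one_mul _
    have hint_bmp : ∀ j : ℕ, Integrable (fun t => bmp j t * Kk u b t) := by
      intro j
      exact integrable_of_bdd_supp ((measurable_bup _ _).mul hKmeas) (3/2) (1/(2*b))
        (fun t => hbound_bmp j t) (fun t ht => by rw [hbmp15 j t ht, zero_mul])
    have hint_psi : Integrable (fun t => ψ t * Kk u b t) := by
      refine integrable_of_bdd_supp (hψmeas.mul hKmeas) (3/2) (1/(2*b)) (fun t => ?_)
        (fun t ht => by rw [hψsupp t ht, zero_mul])
      rw [abs_mul]
      calc |ψ t| * |Kk u b t| ≤ 1 * (1/(2*b)) :=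
        mul_le_mul (hψabs t) (abs_Kk_le u b t hb) (abs_nonneg _) zero_le_one
      _ = 1/(2*b) := one_mul _
    set PS : ℝ → ℝ := fun t => ∑ j ∈ Finset.range (k+1), bmp j t with hPSdef
    have hPSmul : (fun t => PS t * Kk u b t)
        = (fun t => ∑ j ∈ Finset.range (k+1), bmp j t * Kk u b t) := by
      funext t
      rw [hPSdef]
      exact Finset.sum_mul _ _ _
    have hint_PS : Integrable (fun t => PS t * Kk u b t) := by
      rw [hPSmul]
      exact integrable_finset_sum _ (fun j _ => hint_bmp j)
    have hint_tail : Integrable (fun t => (ψ t - PS t) * Kk u b t) := by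
      have e : (fun t => (ψ t - PS t) * Kk u b t)
          = (fun t => ψ t * Kk u b t - PS t * Kk u b t) := by
        funext t; ring
      rw [e]
      exact hint_psi.sub hint_PS
    have hsplit : ∫ t, ψ t * Kk u b t
        = (∑ j ∈ Finset.range k, ∫ t, bmp j t * Kk u b t)
          + (∫ t, bmp k t * Kk u b t) + ∫ t, (ψ t - PS t) * Kk u b t := by
      have e1 : (fun t => ψ t * Kk u b t)
          = (fun t => PS t * Kk u b t + (ψ t - PS t) * Kk u b t) := by
        funext t; ring
      rw [e1, integral_add hint_PS hint_tail, hPSmul,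
        integral_finset_sum _ (fun j _ => hint_bmp j), Finset.sum_range_succ]
    -- main term value
    have hAk := hApos k
    have hr : (0:ℝ) ≤ A k / 2 := by linarith
    have hmainval : ∫ t, bmp k t * Kk u b t
        = Real.log (b^2) - Real.log ((A k / 2)^2 + b^2) := by
      have h := integral_bup_mul_Kk u (A k / 2) u b hb hr
      rw [show u - u = (0:ℝ) from sub_self u] at h
      rw [show ((0:ℝ))^2 + b^2 = b^2 by ring] at h
      rw [show ((0:ℝ) - A k / 2)^2 + b^2 = (A k / 2)^2 + b^2 by ring] at h
      rw [show ((0:ℝ) + A k / 2)^2 + b^2 = (A k / 2)^2 + b^2 by ring] at h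
      have hbmpk : (fun t => bmp k t * Kk u b t) = (fun t => bup u (A k / 2) t * Kk u b t) := by
        funext t
        rw [hbmpdef]
      rw [hbmpk, h]
      ring
    have hmainle : ∫ t, bmp k t * Kk u b t ≤ Real.log b + 2 * Real.log 2 := by
      rw [hmainval]
      have h1 : Real.log (b^2) = 2 * Real.log b := by
        rw [Real.log_pow]; push_cast; ring
      have h2 : Real.log ((A k/2)^2) ≤ Real.log ((A k/2)^2 + b^2) :=
        Real.log_le_log (by positivity) (by nlinarith)
      have h3 : Real.log ((A k/2)^2) = 2*(Real.log (A k) - Real.log 2) := by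
        rw [Real.log_pow, Real.log_div hAk.ne' two_ne_zero]
        push_cast; ring
      have h4 : Real.log b ≤ 2 * Real.log (A k) := by
        have h5 := Real.log_le_log hb (le_of_lt (hBA k))
        rw [Real.log_pow] at h5
        push_cast at h5
        linarith
      linarith
    -- earlier bumps
    have hearly : ∀ j : ℕ, j < k → |∫ t, bmp j t * Kk u b t| ≤ 4 := by
      intro j hjk
      have hAj := hApos j
      have hdist : ∀ t, t ∈ Set.Icc (x (sq j) - A j / 2) (x (sq j) + A j / 2) →
          A j / 4 ≤ |u - t| := by
        intro t ht
        obtain ⟨h1, h2⟩ := ht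
        have h3 : |t - x (sq j)| ≤ A j / 2 := abs_le.mpr ⟨by linarith, by linarith⟩
        have hAxj : |x (sq j)| = A j := by rw [hAdef]
        have h4 : A j / 2 ≤ |t| := by
          have h5 := abs_sub_abs_le_abs_sub (x (sq j)) t
          rw [abs_sub_comm (x (sq j)) t] at h5
          rw [hAxj] at h5
          linarith
        have h6 : |u| ≤ A j / 8 := by
          have h7 := hA8' j k hjk
          have h8 : |u| = A k := by rw [hudef, hAdef]
          linarith
        have h9 : |t| - |u| ≤ |u - t| := by
          have h10 := abs_sub_abs_le_abs_sub t u
          rw [abs_sub_comm t u] at h10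
          linarith
        linarith
      have hb1 := abs_integral_le (f := fun t => bmp j t * Kk u b t)
        (x (sq j) - A j/2) (x (sq j) + A j/2) (4 / A j) (by linarith)
        (fun t ht => by
          show bmp j t * Kk u b t = 0
          have hzz : bmp j t = 0 := by rw [hbmpdef]; exact bup_eq_zero _ _ _ ht
          rw [hzz, zero_mul])
        (fun t ht => by
          show |bmp j t * Kk u b t| ≤ 4 / A j
          rw [abs_mul]
          have hK := abs_Kk_le' u b t (A j/4) (by linarith) (hdist t ht)
          calc |bmp j t| * |Kk u b t| ≤ 1 * (1/(A j/4)) :=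
            mul_le_mul (abs_bup_le _ _ _) hK (abs_nonneg _) zero_le_one
          _ = 4 / A j := by rw [one_mul, one_div_div])
      have harea : (x (sq j) + A j/2 - (x (sq j) - A j/2)) * (4 / A j) = 4 := by
        field_simp
        ring
      linarith [hb1, harea.le, harea.ge]
    have hsum : |∑ j ∈ Finset.range k, ∫ t, bmp j t * Kk u b t| ≤ 4 * k := by
      calc |∑ j ∈ Finset.range k, ∫ t, bmp j t * Kk u b t|
          ≤ ∑ j ∈ Finset.range k, |∫ t, bmp j t * Kk u b t| :=
            Finset.abs_sum_le_sum_abs _ _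
        _ ≤ ∑ _j ∈ Finset.range k, (4:ℝ) :=
            Finset.sum_le_sum (fun j hj => hearly j (Finset.mem_range.mp hj))
        _ = 4 * k := by
            rw [Finset.sum_const, Finset.card_range, nsmul_eq_mul]
            ring
    -- tail
    have htaildiff : ∀ t, |ψ t - PS t| ≤ 1 := by
      intro t
      rcases hψval t with ⟨h0, hall⟩ | ⟨j, hj, hz⟩
      · have hPS0 : PS t = 0 := Finset.sum_eq_zero (fun i _ => hall i)
        rw [h0, hPS0]
        norm_num
      · by_cases hjk : j < k + 1
        · have hPSj : PS t = bmp j t :=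
            Finset.sum_eq_single_of_mem j (Finset.mem_range.mpr hjk) (fun i _ hij => hz i hij)
          rw [hj, hPSj]
          norm_num
        · have hPS0 : PS t = 0 := Finset.sum_eq_zero (fun i hi => by
            refine hz i ?_
            have := Finset.mem_range.mp hi
            omega)
          rw [hj, hPS0, sub_zero]
          exact abs_bup_le _ _ _
    have htailsupp : ∀ t, t ∉ Set.Icc (-(3/2 * A (k+1))) (3/2 * A (k+1)) → ψ t - PS t = 0 := by
      intro t ht
      have hall : ∀ j : ℕ, k + 1 ≤ j → bmp j t = 0 := by
        intro j hj
        by_contra hne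
        have h1 := (hsupp_b j t hne).2
        have h2 := hAmono (k+1) j hj
        have h3 : |t| ≤ 3/2 * A (k+1) := by linarith
        rw [abs_le] at h3
        exact ht (Set.mem_Icc.mpr h3)
      rcases hψval t with ⟨h0, hall0⟩ | ⟨j, hj, hz⟩
      · have hPS0 : PS t = 0 := Finset.sum_eq_zero (fun i _ => hall0 i)
        rw [h0, hPS0, sub_zero]
      · by_cases hbj : bmp j t = 0
        · have hall0 : ∀ i, bmp i t = 0 := by
            intro i
            rcases eq_or_ne i j with rfl | hij
            · exact hbj
            · exact hz i hij
          have hPS0 : PS t = 0 := Finset.sum_eq_zero (fun i _ => hall0 i)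
          rw [hj, hbj, hPS0, sub_zero]
        · have hjk : j < k + 1 := by
            by_contra hge
            exact hbj (hall j (by omega))
          have hPSj : PS t = bmp j t :=
            Finset.sum_eq_single_of_mem j (Finset.mem_range.mpr hjk) (fun i _ hij => hz i hij)
          rw [hj, hPSj, sub_self]
    have htailbd : |∫ t, (ψ t - PS t) * Kk u b t| ≤ 1 := by
      have hA1' : 0 ≤ A (k+1) := (hApos (k+1)).le
      have hb2 := abs_integral_le (f := fun t => (ψ t - PS t) * Kk u b t)
        (-(3/2 * A (k+1))) (3/2 * A (k+1)) (1/(2*b)) (by linarith)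
        (fun t ht => by
          show (ψ t - PS t) * Kk u b t = 0
          rw [htailsupp t ht, zero_mul])
        (fun t _ => by
          show |(ψ t - PS t) * Kk u b t| ≤ 1/(2*b)
          rw [abs_mul]
          calc |ψ t - PS t| * |Kk u b t| ≤ 1 * (1/(2*b)) :=
            mul_le_mul (htaildiff t) (abs_Kk_le u b t hb) (abs_nonneg _) zero_le_one
          _ = 1/(2*b) := one_mul _)
      refine le_trans hb2 ?_
      have e : (3/2 * A (k+1) - -(3/2 * A (k+1))) = 3 * A (k+1) := by ring
      rw [e, mul_one_div, div_le_one (by positivity)]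
      have := hAB8 k
      rw [← hbdef2] at this
      linarith
    -- conclusion of the main estimate
    set L : ℝ := Real.log (1 / b) with hLdef2
    have hLeq : L = -Real.log b := by rw [hLdef2, one_div, Real.log_inv]
    have hlog2 : Real.log 2 ≤ 1 := by
      have := Real.add_one_le_exp (1:ℝ)
      have h2e : (2:ℝ) ≤ Real.exp 1 := by linarith
      calc Real.log 2 ≤ Real.log (Real.exp 1) := Real.log_le_log two_pos h2e
        _ = 1 := Real.log_exp 1
    have hIle : ∫ t, ψ t * Kk u b t ≤ -L + 2 * Real.log 2 + 4*(k:ℝ) + 1 := by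
      rw [hsplit]
      have habs1 : ∑ j ∈ Finset.range k, ∫ t, bmp j t * Kk u b t ≤ 4 * k :=
        le_trans (le_abs_self _) hsum
      have habs2 : ∫ t, (ψ t - PS t) * Kk u b t ≤ 1 := le_trans (le_abs_self _) htailbd
      rw [hLeq]
      linarith
    have habs : L - (4*(k:ℝ) + 3) ≤ |∫ t, ψ t * Kk u b t| := by
      have h7 := neg_le_abs (∫ t, ψ t * Kk u b t)
      linarith
    calc π⁻¹ * (L - (4*(k:ℝ)+3)) ≤ π⁻¹ * |∫ t, ψ t * Kk u b t| :=
        mul_le_mul_of_nonneg_left habs (by positivity)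
      _ ≤ ‖UHG ψ z‖ := hnorm
  -- conclusion
  intro ε hε
  have hπ : 0 < π := Real.pi_pos
  obtain ⟨K, hK⟩ := exists_nat_gt (7 / (π * ε))
  rw [frequently_atTop]
  intro N
  set k := max N K with hk
  refine ⟨sq k, le_trans (le_max_left N K) (hsq_ge k), ?_⟩
  have hLk := hlogB k
  have hL2 : ((k:ℝ)+1)^2 ≤ Real.log (1 / B k) := le_trans (sq_le_four_pow k) hLk
  have hLpos : 0 < Real.log (1 / B k) := lt_of_lt_of_le (by positivity) hL2
  have hBy : B k = y (sq k) := by rw [hBdef]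
  rw [← hBy]
  refine final_div _ _ (4*(k:ℝ)+3) ε (hmain k) hLpos ?_
  have hkK : (K:ℝ) ≤ (k:ℝ) := Nat.cast_le.mpr (le_max_right N K)
  have h7 : 7 < π * ε * ((k:ℝ)+1) := by
    rw [div_lt_iff₀ (by positivity)] at hK
    have h8 : (K:ℝ) * (π * ε) ≤ ((k:ℝ)+1) * (π * ε) :=
      mul_le_mul_of_nonneg_right (by linarith) (by positivity)
    linarith
  have hk1 : (0:ℝ) ≤ (k:ℝ)+1 := by positivity
  have h9 : 7 * ((k:ℝ)+1) ≤ π * ε * ((k:ℝ)+1)^2 := by nlinarith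
  have h10 : π * ε * ((k:ℝ)+1)^2 ≤ π * ε * Real.log (1 / B k) :=
    mul_le_mul_of_nonneg_left hL2 (by positivity)
  have h11 : 4*(k:ℝ)+3 ≤ 7*((k:ℝ)+1) := by
    have : (0:ℝ) ≤ (k:ℝ) := Nat.cast_nonneg k
    linarith
  calc 4*(k:ℝ)+3 ≤ 7*((k:ℝ)+1) := h11
    _ ≤ π * ε * ((k:ℝ)+1)^2 := h9
    _ ≤ π * ε * Real.log (1 / B k) := h10
    _ = ε * π * Real.log (1 / B k) := by ring

/-- **The construction of `g` (upper half-plane form).** For any `x n → 0`, `y n → 0`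
with `y n > 0` there is a measurable, compactly supported `ψ` with `|ψ| ≤ 1`
such that `limsup |G_ψ(x n + i y n)| / log(1/y n) ≥ 1/π`. -/
theorem stmt_15 (x y : ℕ → ℝ) (hy : ∀ n, 0 < y n)
    (hy0 : Tendsto y atTop (𝓝 0)) (hx0 : Tendsto x atTop (𝓝 0)) :
    ∃ ψ : ℝ → ℝ, Measurable ψ ∧ HasCompactSupport ψ ∧ (∀ s : ℝ, |ψ s| ≤ 1) ∧
      ∀ ε > (0:ℝ), ∃ᶠ n in atTop,
        1 / Real.pi - ε ≤
          ‖UHG ψ ((x n : ℂ) + (y n : ℂ) * Complex.I)‖ / Real.log (1 / y n) := by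
  have hyev : ∀ δ : ℝ, 0 < δ → ∀ᶠ n in atTop, y n < δ := by
    intro δ hδ
    have h := Metric.tendsto_atTop.mp hy0 δ hδ
    obtain ⟨N, hN⟩ := h
    rw [eventually_atTop]
    refine ⟨N, fun n hn => ?_⟩
    have := hN n hn
    rw [Real.dist_eq, sub_zero] at this
    exact lt_of_abs_lt this
  have hxev : ∀ δ : ℝ, 0 < δ → ∀ᶠ n in atTop, |x n| < δ := by
    intro δ hδ
    have h := Metric.tendsto_atTop.mp hx0 δ hδ
    obtain ⟨N, hN⟩ := h
    rw [eventually_atTop]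
    refine ⟨N, fun n hn => ?_⟩
    have := hN n hn
    rwa [Real.dist_eq, sub_zero] at this
  by_cases hcase : ∃ᶠ n in atTop, (x n)^2 ≤ y n
  · exact case1 x y hy hyev hcase
  · rw [not_frequently] at hcase
    have hc : ∀ᶠ n in atTop, y n < (x n)^2 := hcase.mono (fun n hn => lt_of_not_ge hn)
    exact case2 x y hy hyev hxev hc
end
end
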